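/- arXiv:1301.7248 — 7 statements merged into one kernel-verified Lean document; each statement's English description precedes it below -/
import Mathlib

section
/- Let X be a complex Hilbert space and J : X → X a bounded invertible operator with J* = −J, and set ω(x,y) := ⟨Jx,y⟩. Let T := (J*J)^{1/2} denote the positive square root of the positive invertible operator J*J. Then ⟨x,y⟩' := ⟨Tx,y⟩ defines an inner product on X whose associated norm is equivalent to the original norm, the operator J' := T⁻¹J satisfies (J')² = −I, and ω(x,y) = ⟨J'x,y⟩' for all x,y ∈ X. -/
set_option synthInstance.maxHeartbeats 1000000
set_option maxHeartbeats 1000000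

/-- For a strong symplectic Hilbert space `(X, ω)` with `ω(x,y) = ⟨Jx,y⟩`,
`J` bounded invertible, `J* = -J`, and `T` the positive square root of `J*J`,
the form `⟨x,y⟩' := ⟨Tx,y⟩` is an inner product with norm equivalent to the original one,
`J' := T⁻¹J` satisfies `J'² = -I`, and `ω(x,y) = ⟨J'x,y⟩'`. -/
theorem weak_strong_deformation
    {X : Type*} [NormedAddCommGroup X] [InnerProductSpace ℂ X] [CompleteSpace X]
    (J : X →L[ℂ] X)
    (hJskew : ContinuousLinearMap.adjoint J = -J)
    (hJinv : ∃ Jinv : X →L[ℂ] X,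
      J.comp Jinv = ContinuousLinearMap.id ℂ X ∧ Jinv.comp J = ContinuousLinearMap.id ℂ X)
    -- `T` is the positive square root of `J*J`
    (T : X →L[ℂ] X) (hTpos : T.IsPositive)
    (hTsq : T.comp T = (ContinuousLinearMap.adjoint J).comp J) :
    -- `⟨x,y⟩' := ⟨Tx,y⟩` is an inner product (conjugate symmetric and positive definite;
    -- sesquilinearity is automatic):
    ((∀ x y : X, (inner ℂ (T y) x : ℂ) = starRingEnd ℂ (inner ℂ (T x) y : ℂ)) ∧
      (∀ x : X, x ≠ 0 → 0 < (inner ℂ (T x) x : ℂ).re)) ∧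
    -- the associated norm is equivalent to the original norm:
    (∃ c > (0 : ℝ), ∃ C > (0 : ℝ), ∀ x : X,
      c * ‖x‖ ^ 2 ≤ (inner ℂ (T x) x : ℂ).re ∧ (inner ℂ (T x) x : ℂ).re ≤ C * ‖x‖ ^ 2) ∧
    -- `J' := T⁻¹ J` exists (uniquely determined by `T ∘ J' = J`):
    (∃! J' : X →L[ℂ] X, T.comp J' = J) ∧
    -- and it satisfies `(J')² = -I` and `ω(x,y) = ⟨J'x,y⟩'`:
    (∀ J' : X →L[ℂ] X, T.comp J' = J →
      J'.comp J' = -ContinuousLinearMap.id ℂ X ∧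
      ∀ x y : X, (inner ℂ (J x) y : ℂ) = (inner ℂ (T (J' x)) y : ℂ)) := by
  obtain ⟨Ji, hJl0, hJr0⟩ := hJinv
  have hJl : J * Ji = 1 := hJl0
  have hJr : Ji * J = 1 := hJr0
  have hsk : star J = -J := by rw [ContinuousLinearMap.star_eq_adjoint, hJskew]
  have hT0 : (0 : X →L[ℂ] X) ≤ T := (ContinuousLinearMap.nonneg_iff_isPositive T).mpr hTpos
  have hTsa : star T = T := hTpos.isSelfAdjoint
  have hTadj : ContinuousLinearMap.adjoint T = T := by
    rw [← ContinuousLinearMap.star_eq_adjoint]; exact hTsa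
  have hS : T * T = star J * J := by
    rw [ContinuousLinearMap.star_eq_adjoint]; exact hTsq
  have hJJ : J * J = -(T * T) := by rw [hS, hsk, neg_mul, neg_neg]
  obtain ⟨Si, hSi⟩ : ∃ t : X →L[ℂ] X, t = -(Ji * Ji) := ⟨_, rfl⟩
  have hSl : (T * T) * Si = 1 := by
    rw [hS, hsk, hSi, neg_mul J J, neg_mul_neg, mul_assoc, ← mul_assoc J Ji Ji, hJl,
      one_mul, hJl]
  have hSr : Si * (T * T) = 1 := by
    rw [hS, hsk, hSi, neg_mul J J, neg_mul_neg, mul_assoc, ← mul_assoc Ji J J, hJr,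
      one_mul, hJr]
  have hTSi : T * Si = Si * T := by
    have h1 : (Si * (T * T)) * (T * Si) = (Si * T) * ((T * T) * Si) := by
      simp only [mul_assoc]
    rw [hSr, one_mul, hSl, mul_one] at h1
    exact h1
  obtain ⟨Ti, hTi⟩ : ∃ t : X →L[ℂ] X, t = Si * T := ⟨_, rfl⟩
  have hTil : Ti * T = 1 := by rw [hTi, mul_assoc, hSr]
  have hTir : T * Ti = 1 := by rw [hTi, ← mul_assoc, hTSi, mul_assoc, hSr]
  have hTisa : star Ti = Ti := by
    calc star Ti = star Ti * (T * Ti) := by rw [hTir, mul_one]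
      _ = (star Ti * star T) * Ti := by rw [← mul_assoc, hTsa]
      _ = star (T * Ti) * Ti := by rw [star_mul T Ti]
      _ = Ti := by rw [hTir, star_one, one_mul]
  obtain ⟨U, hU⟩ : ∃ t : X →L[ℂ] X, t = J * Ti := ⟨_, rfl⟩
  have hUstar : star U = -(Ti * J) := by
    rw [hU, star_mul J Ti, hTisa, hsk, mul_neg]
  have hUU : star U * U = 1 := by
    have h2 : (Ti * J) * (J * Ti) = Ti * ((J * J) * Ti) := by simp only [mul_assoc]
    rw [hUstar, hU, neg_mul, h2, hJJ, neg_mul, mul_neg, neg_neg]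
    have h3 : Ti * ((T * T) * Ti) = (Ti * T) * (T * Ti) := by simp only [mul_assoc]
    rw [h3, hTil, one_mul, hTir]
  have hTiTi : Ti * Ti = Si := by
    calc Ti * Ti = Si * ((T * Si) * T) := by rw [hTi]; simp only [mul_assoc]
      _ = Si * ((Si * T) * T) := by rw [hTSi]
      _ = Si * (Si * (T * T)) := by rw [mul_assoc]
      _ = Si := by rw [hSr, mul_one]
  have hV0 : (0 : X →L[ℂ] X) ≤ U * T * star U := star_right_conjugate_nonneg hT0 U
  have hVV : (U * T * star U) * (U * T * star U) = T * T := by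
    have h2 : (U * T * star U) * (U * T * star U) = U * (T * ((star U * U) * (T * star U))) := by
      simp only [mul_assoc]
    rw [h2, hUU, one_mul, hUstar, hU, mul_neg, mul_neg, mul_neg]
    have h3 : (J * Ti) * (T * (T * (Ti * J))) = J * ((Ti * T) * ((T * Ti) * J)) := by
      simp only [mul_assoc]
    rw [h3, hTil, hTir, one_mul, one_mul, hJJ, neg_neg]
  have hVT : U * T * star U = T :=
    (CFC.sqrt_unique hVV hV0).symm.trans (CFC.sqrt_unique rfl hT0)
  have hUT : U * T = T * U := by
    have h1 : U * T * (star U * U) = (U * T * star U) * U := by simp only [mul_assoc]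
    rw [hUU, mul_one, hVT] at h1
    exact h1
  have hJT : J * T = T * J := by
    have h1 : U * T = J := by rw [hU, mul_assoc, hTil, mul_one]
    have h2 : J = T * (J * Ti) := by rw [← hU, ← hUT, h1]
    calc J * T = (T * (J * Ti)) * T := by rw [← h2]
      _ = T * (J * (Ti * T)) := by simp only [mul_assoc]
      _ = T * J := by rw [hTil, mul_one]
  have hTiJ : Ti * J = J * Ti := by
    calc Ti * J = Ti * (J * (T * Ti)) := by rw [hTir, mul_one]
      _ = Ti * (J * T) * Ti := by simp only [mul_assoc]
      _ = Ti * (T * J) * Ti := by rw [hJT]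
      _ = (Ti * T) * (J * Ti) := by simp only [mul_assoc]
      _ = J * Ti := by rw [hTil, one_mul]
  have hkey : (Ti * J) * (Ti * J) = -1 := by
    calc (Ti * J) * (Ti * J) = Ti * ((J * Ti) * J) := by simp only [mul_assoc]
      _ = Ti * ((Ti * J) * J) := by rw [hTiJ]
      _ = (Ti * Ti) * (J * J) := by simp only [mul_assoc]
      _ = -1 := by rw [hTiTi, hJJ, mul_neg, hSr]
  -- helper: real part of ⟪y,y⟫ is the squared norm
  have hnorm : ∀ y : X, (inner ℂ y y : ℂ).re = ‖y‖ ^ 2 := fun y => by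
    simpa using inner_self_eq_norm_sq (𝕜 := ℂ) y
  -- square root of T for the norm bounds
  obtain ⟨R, hR⟩ : ∃ t : X →L[ℂ] X, t = CFC.sqrt T := ⟨_, rfl⟩
  have hR0 : (0 : X →L[ℂ] X) ≤ R := by rw [hR]; exact CFC.sqrt_nonneg T
  have hRR : R * R = T := by rw [hR]; exact CFC.sqrt_mul_sqrt_self T hT0
  have hRadj : ContinuousLinearMap.adjoint R = R := by
    rw [← ContinuousLinearMap.star_eq_adjoint]
    exact ((ContinuousLinearMap.nonneg_iff_isPositive R).mp hR0).isSelfAdjoint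
  have hTx : ∀ x : X, T x = R (R x) := by
    intro x; rw [← hRR]; rfl
  have hinnerT : ∀ x : X, (inner ℂ (T x) x : ℂ).re = ‖R x‖ ^ 2 := by
    intro x
    have h1 : (inner ℂ (R (R x)) x : ℂ) = inner ℂ (R x) (R x) := by
      have e := ContinuousLinearMap.adjoint_inner_left R x (R x)
      rwa [hRadj] at e
    rw [hTx, h1, hnorm]
  have hJx : ∀ x : X, ‖x‖ ≤ ‖Ji‖ * ‖J x‖ := by
    intro x
    have h1 : Ji (J x) = x := by
      have := ContinuousLinearMap.ext_iff.mp hJr0 x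
      simpa using this
    calc ‖x‖ = ‖Ji (J x)‖ := by rw [h1]
      _ ≤ ‖Ji‖ * ‖J x‖ := Ji.le_opNorm _
  have hJTn : ∀ x : X, ‖J x‖ = ‖T x‖ := by
    intro x
    have e1 := ContinuousLinearMap.adjoint_inner_left J x (J x)
    have e2 := ContinuousLinearMap.adjoint_inner_left T x (T x)
    rw [hTadj] at e2
    have e3 : ContinuousLinearMap.adjoint J (J x) = T (T x) := by
      rw [← ContinuousLinearMap.comp_apply, ← hTsq, ContinuousLinearMap.comp_apply]
    rw [e3, e2] at e1
    have e4 := congrArg Complex.re e1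
    rw [hnorm, hnorm] at e4
    calc ‖J x‖ = Real.sqrt (‖J x‖ ^ 2) := (Real.sqrt_sq (norm_nonneg _)).symm
      _ = Real.sqrt (‖T x‖ ^ 2) := by rw [e4]
      _ = ‖T x‖ := Real.sqrt_sq (norm_nonneg _)
  have hTn : ∀ x : X, ‖T x‖ ≤ ‖R‖ * ‖R x‖ := by
    intro x
    rw [hTx]
    exact R.le_opNorm _
  have hK : ∀ x : X, ‖x‖ ≤ ((‖Ji‖ + 1) * (‖R‖ + 1)) * ‖R x‖ := by
    intro x
    calc ‖x‖ ≤ ‖Ji‖ * ‖J x‖ := hJx x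
      _ = ‖Ji‖ * ‖T x‖ := by rw [hJTn]
      _ ≤ ‖Ji‖ * (‖R‖ * ‖R x‖) := mul_le_mul_of_nonneg_left (hTn x) (norm_nonneg _)
      _ ≤ ((‖Ji‖ + 1) * (‖R‖ + 1)) * ‖R x‖ := by
          nlinarith [norm_nonneg Ji, norm_nonneg R, norm_nonneg (R x)]
  obtain ⟨K, hKdef⟩ : ∃ t : ℝ, t = (‖Ji‖ + 1) * (‖R‖ + 1) := ⟨_, rfl⟩
  have hKx : ∀ x : X, ‖x‖ ≤ K * ‖R x‖ := by intro x; rw [hKdef]; exact hK x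
  have hKpos : 0 < K := by rw [hKdef]; positivity
  have lower : ∀ x : X, (K ^ 2)⁻¹ * ‖x‖ ^ 2 ≤ (inner ℂ (T x) x : ℂ).re := by
    intro x
    rw [hinnerT]
    have h1 : ‖x‖ ^ 2 ≤ K ^ 2 * ‖R x‖ ^ 2 := by
      have := hKx x
      nlinarith [norm_nonneg x, norm_nonneg (R x)]
    rw [inv_mul_le_iff₀ (by positivity)]
    exact h1
  have upper : ∀ x : X, (inner ℂ (T x) x : ℂ).re ≤ ((‖R‖ + 1) ^ 2) * ‖x‖ ^ 2 := by
    intro x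
    rw [hinnerT]
    have h1 : ‖R x‖ ≤ ‖R‖ * ‖x‖ := R.le_opNorm x
    nlinarith [norm_nonneg (R x), norm_nonneg R, norm_nonneg x]
  refine ⟨⟨?_, ?_⟩, ⟨(K ^ 2)⁻¹, by positivity, (‖R‖ + 1) ^ 2, by positivity,
      fun x => ⟨lower x, upper x⟩⟩, ?_, ?_⟩
  · -- conjugate symmetry
    intro x y
    have h1 := ContinuousLinearMap.adjoint_inner_left T x y
    rw [hTadj] at h1
    rw [h1, ← inner_conj_symm]
  · -- positive definiteness
    intro x hx
    have h1 := lower x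
    have h2 : 0 < (K ^ 2)⁻¹ * ‖x‖ ^ 2 := by
      have : 0 < ‖x‖ := norm_pos_iff.mpr hx
      positivity
    linarith
  · -- existence and uniqueness of J'
    refine ⟨Ti * J, ?_, ?_⟩
    · show T * (Ti * J) = J
      rw [← mul_assoc, hTir, one_mul]
    · intro K' hK'
      have hK'' : T * K' = J := hK'
      calc K' = (Ti * T) * K' := by rw [hTil, one_mul]
        _ = Ti * (T * K') := by rw [mul_assoc]
        _ = Ti * J := by rw [hK'']
  · intro J' hJ'
    have hJ'' : T * J' = J := hJ'
    have hJ'eq : J' = Ti * J := by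
      calc J' = (Ti * T) * J' := by rw [hTil, one_mul]
        _ = Ti * (T * J') := by rw [mul_assoc]
        _ = Ti * J := by rw [hJ'']
    constructor
    · show J' * J' = -1
      rw [hJ'eq]; exact hkey
    · intro x y
      have h1 : T (J' x) = J x := by
        rw [← ContinuousLinearMap.comp_apply, hJ']
      rw [h1]
end

section
/- Let X be a complex Hilbert space, J : X → X a bounded invertible operator with J* = −J, and ω(x,y) := ⟨Jx,y⟩. Let λ and μ be Lagrangian subspaces of (X, ω) (i.e. λ = λ^ω and μ = μ^ω) such that dim(λ ∩ μ) < ∞ and dim X/(λ + μ) < ∞. Then dim(λ ∩ μ) = dim X/(λ + μ), i.e. every Fredholm pair of Lagrangian subspaces of a strong symplectic Hilbert space has index 0. -/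
/-- The annihilator of a set `S` with respect to a sesquilinear form `ω`:
`S^ω = {y | ω(x,y) = 0 for all x ∈ S}`. -/
def annSet {X : Type*} (ω : X → X → ℂ) (S : Set X) : Set X :=
  {y | ∀ x ∈ S, ω x y = 0}

/-- The range of a bounded operator between Banach spaces which admits a finite-dimensional
algebraic complement is closed. -/
theorem isClosed_range_of_finiteDim_compl
    {E F : Type*} [NormedAddCommGroup E] [NormedSpace ℂ E] [CompleteSpace E]
    [NormedAddCommGroup F] [NormedSpace ℂ F] [CompleteSpace F]
    (T : E →L[ℂ] F) (W : Submodule ℂ F) [FiniteDimensional ℂ W]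
    (hW : LinearMap.range (T : E →ₗ[ℂ] F) ⊔ W = ⊤) :
    IsClosed ((LinearMap.range (T : E →ₗ[ℂ] F) : Submodule ℂ F) : Set F) := by
  set R : Submodule ℂ F := LinearMap.range (T : E →ₗ[ℂ] F) with hR
  let S : E × W →L[ℂ] F :=
    (T.comp (ContinuousLinearMap.fst ℂ E W)) + (W.subtypeL.comp (ContinuousLinearMap.snd ℂ E W))
  have hS : ∀ p : E × W, S p = T p.1 + (p.2 : F) := fun p => rfl
  have hsurj : Function.Surjective S := by
    intro x
    have hx : x ∈ R ⊔ W := by rw [hW]; trivial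
    rcases Submodule.mem_sup.1 hx with ⟨t, ht, w, hw, rfl⟩
    rcases ht with ⟨e, rfl⟩
    exact ⟨(e, ⟨w, hw⟩), rfl⟩
  have hopen : IsOpenMap S := S.isOpenMap hsurj
  have hpre : S ⁻¹' (R : Set F)
      = Set.univ ×ˢ ((Submodule.comap W.subtype R : Submodule ℂ W) : Set W) := by
    ext ⟨e, w⟩
    simp only [Set.mem_preimage, Set.mem_prod, Set.mem_univ, true_and, SetLike.mem_coe,
      Submodule.mem_comap, Submodule.coe_subtype, hS]
    constructor
    · intro h
      have hw : (w : F) = (T e + (w : F)) - T e := by abel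
      rw [hw]
      exact R.sub_mem h (LinearMap.mem_range_self (T : E →ₗ[ℂ] F) e)
    · intro h
      exact R.add_mem (LinearMap.mem_range_self (T : E →ₗ[ℂ] F) e) h
  have hclosedpre : IsClosed (S ⁻¹' (R : Set F)) := by
    rw [hpre]
    exact isClosed_univ.prod (Submodule.closed_of_finiteDimensional _)
  have himg : (R : Set F)ᶜ = S '' ((S ⁻¹' (R : Set F))ᶜ) := by
    rw [← Set.preimage_compl, Set.image_preimage_eq _ hsurj]
  rw [← isOpen_compl_iff, himg]
  exact hopen _ hclosedpre.isOpen_compl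

/-- The sum of two closed subspaces of a Banach space with finite-dimensional quotient
is closed. -/
theorem isClosed_sup_of_quotient_finiteDimensional
    {F : Type*} [NormedAddCommGroup F] [NormedSpace ℂ F] [CompleteSpace F]
    {A B : Submodule ℂ F} (hA : IsClosed (A : Set F)) (hB : IsClosed (B : Set F))
    (hfin : FiniteDimensional ℂ (F ⧸ (A ⊔ B))) :
    IsClosed ((A ⊔ B : Submodule ℂ F) : Set F) := by
  obtain ⟨W, hWc⟩ := Submodule.exists_isCompl (A ⊔ B)
  haveI : FiniteDimensional ℂ W :=
    (Submodule.quotientEquivOfIsCompl (A ⊔ B) W hWc).finiteDimensional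
  haveI : CompleteSpace A := hA.completeSpace_coe
  haveI : CompleteSpace B := hB.completeSpace_coe
  let T : A × B →L[ℂ] F :=
    (A.subtypeL.comp (ContinuousLinearMap.fst ℂ A B)) +
      (B.subtypeL.comp (ContinuousLinearMap.snd ℂ A B))
  have hT : ∀ p : A × B, T p = (p.1 : F) + (p.2 : F) := fun p => rfl
  have hrange : LinearMap.range (T : A × B →ₗ[ℂ] F) = A ⊔ B := by
    apply le_antisymm
    · rintro x ⟨⟨a, b⟩, rfl⟩
      exact Submodule.add_mem _ (Submodule.mem_sup_left a.2) (Submodule.mem_sup_right b.2)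
    · rw [sup_le_iff]
      constructor
      · intro a ha
        exact ⟨(⟨a, ha⟩, 0), by simp [hT]⟩
      · intro b hb
        exact ⟨(0, ⟨b, hb⟩), by simp [hT]⟩
  have := isClosed_range_of_finiteDim_compl T W (by rw [hrange, hWc.sup_eq_top])
  rwa [hrange] at this

/-- In a strong symplectic Hilbert space `(X, ω)`, `ω(x,y) = ⟨Jx,y⟩` with `J`
bounded invertible and `J* = -J`, every Fredholm pair `(λ, μ)` of Lagrangian subspaces has
index `0`, i.e. `dim (λ ∩ μ) = dim X/(λ + μ)`. -/
theorem fredholm_pair_of_lagrangians_index_zero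
    {X : Type*} [NormedAddCommGroup X] [InnerProductSpace ℂ X] [CompleteSpace X]
    (J : X →L[ℂ] X)
    (hJskew : ContinuousLinearMap.adjoint J = -J)
    (hJinv : ∃ Jinv : X →L[ℂ] X,
      J.comp Jinv = ContinuousLinearMap.id ℂ X ∧ Jinv.comp J = ContinuousLinearMap.id ℂ X)
    (lam mu : Submodule ℂ X)
    -- `λ` and `μ` are Lagrangian: each equals its annihilator w.r.t. `ω(x,y) = ⟨Jx,y⟩`
    (hlam : (lam : Set X) = annSet (fun x y => (inner ℂ (J x) y : ℂ)) (lam : Set X))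
    (hmu : (mu : Set X) = annSet (fun x y => (inner ℂ (J x) y : ℂ)) (mu : Set X))
    -- `(λ, μ)` is a Fredholm pair
    (hfin₁ : FiniteDimensional ℂ ↥(lam ⊓ mu))
    (hfin₂ : FiniteDimensional ℂ (X ⧸ (lam ⊔ mu))) :
    Module.finrank ℂ ↥(lam ⊓ mu) = Module.finrank ℂ (X ⧸ (lam ⊔ mu)) := by
  classical
  obtain ⟨Jinv, hJI, hIJ⟩ := hJinv
  have hleft : Function.LeftInverse Jinv J := fun x => by
    have := congrArg (fun f : X →L[ℂ] X => f x) hIJ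
    simpa using this
  have hright : Function.RightInverse Jinv J := fun x => by
    have := congrArg (fun f : X →L[ℂ] X => f x) hJI
    simpa using this
  have hJinj : Function.Injective J := hleft.injective
  set Jlin : X →ₗ[ℂ] X := (J : X →ₗ[ℂ] X) with hJlin
  have hJlin_apply : ∀ x, Jlin x = J x := fun _ => rfl
  -- the ω-annihilator of a submodule p is the orthogonal complement of J(p)
  have hann : ∀ p : Submodule ℂ X,
      annSet (fun x y => (inner ℂ (J x) y : ℂ)) (p : Set X)
        = ((Submodule.map Jlin p)ᗮ : Set X) := by
    intro p
    ext y
    constructor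
    · intro h
      rw [SetLike.mem_coe, Submodule.mem_orthogonal]
      rintro u ⟨x, hx, rfl⟩
      exact h x hx
    · intro h x hx
      exact (Submodule.mem_orthogonal _ _).1 h (Jlin x) ⟨x, hx, rfl⟩
  have hlam' : lam = (Submodule.map Jlin lam)ᗮ :=
    SetLike.coe_injective (hlam.trans (hann lam))
  have hmu' : mu = (Submodule.map Jlin mu)ᗮ :=
    SetLike.coe_injective (hmu.trans (hann mu))
  have hclam : IsClosed (lam : Set X) := by
    rw [hlam']; exact Submodule.isClosed_orthogonal _
  have hcmu : IsClosed (mu : Set X) := by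
    rw [hmu']; exact Submodule.isClosed_orthogonal _
  -- the image under J of a closed subspace is closed
  have hmapclosed : ∀ p : Submodule ℂ X, IsClosed (p : Set X) →
      IsClosed ((Submodule.map Jlin p : Submodule ℂ X) : Set X) := by
    intro p hp
    have hset : ((Submodule.map Jlin p : Submodule ℂ X) : Set X)
        = Jinv ⁻¹' (p : Set X) := by
      ext y
      constructor
      · rintro ⟨x, hx, rfl⟩
        simpa [hJlin_apply, hleft x] using hx
      · intro hy
        exact ⟨Jinv y, hy, by simp [hJlin_apply, hright y]⟩
    rw [hset]
    exact hp.preimage Jinv.continuous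
  -- λᗮ = J(λ), μᗮ = J(μ)
  haveI cmaplam : CompleteSpace (Submodule.map Jlin lam) :=
    (hmapclosed lam hclam).completeSpace_coe
  haveI cmapmu : CompleteSpace (Submodule.map Jlin mu) :=
    (hmapclosed mu hcmu).completeSpace_coe
  have horthlam : lamᗮ = Submodule.map Jlin lam := by
    conv_lhs => rw [hlam']
    exact Submodule.orthogonal_orthogonal _
  have horthmu : muᗮ = Submodule.map Jlin mu := by
    conv_lhs => rw [hmu']
    exact Submodule.orthogonal_orthogonal _
  -- (λ ⊔ μ)ᗮ = J(λ ⊓ μ)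
  have hKorth : (lam ⊔ mu)ᗮ = Submodule.map Jlin (lam ⊓ mu) := by
    rw [← Submodule.inf_orthogonal, horthlam, horthmu, ← Submodule.map_inf Jlin hJinj]
  -- λ ⊔ μ is closed
  have hKclosed : IsClosed ((lam ⊔ mu : Submodule ℂ X) : Set X) :=
    isClosed_sup_of_quotient_finiteDimensional hclam hcmu hfin₂
  haveI : CompleteSpace (lam ⊔ mu : Submodule ℂ X) := hKclosed.completeSpace_coe
  have hcompl : IsCompl (lam ⊔ mu) (lam ⊔ mu)ᗮ :=
    Submodule.isCompl_orthogonal_of_hasOrthogonalProjection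
  -- assemble the dimension count
  have e₁ : (X ⧸ (lam ⊔ mu)) ≃ₗ[ℂ] (lam ⊔ mu)ᗮ :=
    Submodule.quotientEquivOfIsCompl _ _ hcompl
  have e₂ : ↥(lam ⊓ mu) ≃ₗ[ℂ] Submodule.map Jlin (lam ⊓ mu) :=
    Submodule.equivMapOfInjective Jlin hJinj (lam ⊓ mu)
  calc Module.finrank ℂ ↥(lam ⊓ mu)
      = Module.finrank ℂ (Submodule.map Jlin (lam ⊓ mu)) := e₂.finrank_eq
    _ = Module.finrank ℂ ((lam ⊔ mu)ᗮ) := by rw [hKorth]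
    _ = Module.finrank ℂ (X ⧸ (lam ⊔ mu)) := e₁.finrank_eq.symm
end

section
/- Let (X, ω) be a strong symplectic Banach space with a symplectic splitting X = X⁺ ⊕ X⁻, and let λ be a closed isotropic subspace, written as the graph λ = {x + Ux : x ∈ dom(U)} of the injective operator U : dom(U) → X⁻ with dom(U) ⊆ X⁺. Then dom(U) and ran(U) are closed. If moreover λ is Lagrangian, then dom(U) = X⁺ and ran(U) = X⁻, and U is a bounded bijection from X⁺ onto X⁻ with bounded inverse. -/
section AuxiliaryLemmas

lemma cs_aux (a d : ℝ) (b : ℂ) (ha : 0 ≤ a) (hd : 0 ≤ d)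
    (h : ∀ t : ℂ, 0 ≤ a + 2 * (t * b).re + Complex.normSq t * d) :
    Complex.normSq b ≤ a * d := by
  have key : ∀ r : ℝ, 0 ≤ a + 2 * (r * Complex.normSq b) + (r ^ 2 * Complex.normSq b) * d := by
    intro r
    have h1 := h ((r : ℂ) * (starRingEnd ℂ) b)
    have e1 : ((r : ℂ) * (starRingEnd ℂ) b * b) = ((r * Complex.normSq b : ℝ) : ℂ) := by
      rw [mul_assoc, Complex.normSq_eq_conj_mul_self.symm]
      push_cast
      ring
    have e2 : Complex.normSq ((r : ℂ) * (starRingEnd ℂ) b) = r ^ 2 * Complex.normSq b := by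
      rw [Complex.normSq_mul, Complex.normSq_conj, Complex.normSq_ofReal]
      ring
    rw [e1, e2] at h1
    simpa using h1
  by_cases hb : Complex.normSq b = 0
  · rw [hb]; positivity
  · have hb2 : 0 < Complex.normSq b := lt_of_le_of_ne (Complex.normSq_nonneg b) (Ne.symm hb)
    by_cases hd0 : d = 0
    · exfalso
      have h1 := key (-(a + 1) / Complex.normSq b)
      rw [hd0] at h1
      have : -(a+1) / Complex.normSq b * Complex.normSq b = -(a+1) := by
        field_simp
      nlinarith
    · have hdpos : 0 < d := lt_of_le_of_ne hd (Ne.symm hd0)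
      have h1 := key (-1 / d)
      have e3 : (-1/d) ^ 2 * Complex.normSq b * d = Complex.normSq b / d := by
        field_simp
      rw [e3] at h1
      have e4 : -1/d * Complex.normSq b = -(Complex.normSq b / d) := by ring
      rw [e4] at h1
      have : Complex.normSq b / d ≤ a := by linarith
      calc Complex.normSq b = (Complex.normSq b / d) * d := by field_simp
      _ ≤ a * d := by nlinarith

lemma cauchy_transfer {X Y : Type*} [PseudoMetricSpace X] [PseudoMetricSpace Y]
    (f : ℕ → X) (g : ℕ → Y) (C : ℝ) (hC : 0 ≤ C)
    (h : ∀ m n, dist (g m) (g n) ≤ C * dist (f m) (f n))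
    (hf : CauchySeq f) : CauchySeq g := by
  rw [Metric.cauchySeq_iff] at hf ⊢
  intro ε hε
  obtain ⟨N, hN⟩ := hf (ε / (C + 1)) (by positivity)
  refine ⟨N, fun m hm n hn => ?_⟩
  calc dist (g m) (g n) ≤ C * dist (f m) (f n) := h m n
  _ ≤ C * (ε / (C + 1)) := by
      have := le_of_lt (hN m hm n hn)
      nlinarith [dist_nonneg (x := f m) (y := f n)]
  _ < ε := by
      rw [mul_div_assoc'] at *
      rw [div_lt_iff₀ (by linarith)]
      nlinarith

lemma sep_functional {X : Type*} [NormedAddCommGroup X] [NormedSpace ℂ X]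
    (W : Submodule ℂ X) (hW : IsClosed (W : Set X)) {x : X} (hx : x ∉ W) :
    ∃ g : X →L[ℂ] ℂ, (∀ w ∈ W, g w = 0) ∧ g x ≠ 0 := by
  have hconv : Convex ℝ (W : Set X) :=
    (W.restrictScalars ℝ).convex
  obtain ⟨f, u, hfW, hfx⟩ :=
    RCLike.geometric_hahn_banach_closed_point (𝕜 := ℂ) hconv hW hx
  have hu : 0 < u := by
    have h0 := hfW 0 W.zero_mem
    simpa using h0
  refine ⟨f, fun w hw => ?_, fun hzero => by rw [hzero] at hfx; simp at hfx; linarith⟩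
  by_contra hfw
  -- scale w : for t real, (t * conj (f w)) • w ∈ W
  have hns : 0 < Complex.normSq (f w) := Complex.normSq_pos.2 hfw
  set c : ℂ := ((u + 1) / Complex.normSq (f w) : ℝ) * (starRingEnd ℂ) (f w) with hc
  have hcw : c • w ∈ W := W.smul_mem c hw
  have := hfW _ hcw
  rw [map_smul] at this
  have e1 : c * f w = ((u + 1 : ℝ) : ℂ) := by
    rw [hc, mul_assoc, Complex.normSq_eq_conj_mul_self.symm]
    push_cast
    rw [div_mul_cancel₀]
    exact_mod_cast Complex.normSq_pos.2 hfw |>.ne'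
  rw [smul_eq_mul, e1] at this
  simp at this
  linarith

end AuxiliaryLemmas

set_option maxHeartbeats 1600000 in
/-- In a strong symplectic Banach space with symplectic splitting
`X = X⁺ ⊕ X⁻`, if a closed isotropic subspace `λ` is the graph of the injective operator
`U : dom(U) → X⁻`, `dom(U) ⊆ X⁺`, then `dom(U)` and `ran(U)` are closed; if moreover `λ` is
Lagrangian then `dom(U) = X⁺`, `ran(U) = X⁻`, and `U` is a bounded bijection from `X⁺` onto
`X⁻` with bounded inverse. -/
theorem closed_isotropic_graph_in_strong_space
    {X : Type*} [NormedAddCommGroup X] [NormedSpace ℂ X] [CompleteSpace X]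
    (ω : X → X → ℂ)
    -- ω is linear in the first variable and conjugate linear in the second
    (h1add : ∀ x y z : X, ω (x + y) z = ω x z + ω y z)
    (h1smul : ∀ (c : ℂ) (x y : X), ω (c • x) y = c * ω x y)
    (h2add : ∀ x y z : X, ω x (y + z) = ω x y + ω x z)
    (h2smul : ∀ (c : ℂ) (x y : X), ω x (c • y) = starRingEnd ℂ c * ω x y)
    -- ω is skew-symmetric, non-degenerate and bounded
    (hskew : ∀ x y : X, ω y x = -starRingEnd ℂ (ω x y))
    (hnondeg : ∀ x : X, (∀ y : X, ω x y = 0) → x = 0)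
    (hbound : ∃ C : ℝ, ∀ x y : X, ‖ω x y‖ ≤ C * ‖x‖ * ‖y‖)
    -- ω is strong: every bounded conjugate-linear functional is of the form `ω(x,·)`
    (hstrong : ∀ f : X →SL[starRingEnd ℂ] ℂ, ∃ x : X, ∀ y : X, ω x y = f y)
    -- symplectic splitting X = X⁺ ⊕ X⁻
    (Xp Xm : Submodule ℂ X)
    (hinf : Xp ⊓ Xm = ⊥) (hsup : Xp ⊔ Xm = ⊤)
    (horth : ∀ x ∈ Xp, ∀ y ∈ Xm, ω x y = 0)
    (hpos : ∀ x ∈ Xp, x ≠ 0 → 0 < (-Complex.I * ω x x).re)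
    (hneg : ∀ x ∈ Xm, x ≠ 0 → (-Complex.I * ω x x).re < 0)
    -- λ is a closed isotropic subspace, written as the graph of U
    (lam : Submodule ℂ X)
    (hclosed : IsClosed (lam : Set X))
    (hiso : (lam : Set X) ⊆ annSet ω (lam : Set X))
    (dom : Submodule ℂ X) (U : ↥dom →ₗ[ℂ] X)
    (hdom : dom ≤ Xp) (hUran : ∀ v : ↥dom, U v ∈ Xm) (hUinj : Function.Injective U)
    (hgraph : (lam : Set X) = {z | ∃ v : ↥dom, z = (v : X) + U v}) :
    -- dom(U) and ran(U) are closed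
    IsClosed (dom : Set X) ∧
    IsClosed (Set.range fun v : ↥dom => U v) ∧
    -- if λ is Lagrangian, U is a bounded bijection from X⁺ onto X⁻ with bounded inverse
    ((lam : Set X) = annSet ω (lam : Set X) →
      dom = Xp ∧
      (Set.range fun v : ↥dom => U v) = (Xm : Set X) ∧
      (∃ C : ℝ, ∀ v : ↥dom, ‖U v‖ ≤ C * ‖(v : X)‖) ∧
      (∃ c > (0 : ℝ), ∀ v : ↥dom, c * ‖(v : X)‖ ≤ ‖U v‖)) := by
  obtain ⟨C0, hC0⟩ := hbound
  set C : ℝ := max C0 1 with hCdef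
  have hCpos : 0 < C := lt_of_lt_of_le one_pos (le_max_right _ _)
  have hC : ∀ x y : X, ‖ω x y‖ ≤ C * ‖x‖ * ‖y‖ := by
    intro x y
    calc ‖ω x y‖ ≤ C0 * ‖x‖ * ‖y‖ := hC0 x y
    _ ≤ C * ‖x‖ * ‖y‖ := by
        have : (0:ℝ) ≤ ‖x‖ * ‖y‖ := by positivity
        have hle : C0 ≤ C := le_max_left _ _
        nlinarith
  -- zero lemmas
  have hz1 : ∀ y : X, ω 0 y = 0 := by
    intro y
    have := h1smul 0 0 y
    simpa using this
  have hz2 : ∀ x : X, ω x 0 = 0 := by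
    intro x
    have := h2smul 0 x 0
    simpa using this
  -- the bounded conjugate-linear functionals ω x ⬝
  set F : X → (X →SL[starRingEnd ℂ] ℂ) := fun x => LinearMap.mkContinuous
    { toFun := ω x, map_add' := h2add x,
      map_smul' := fun c y => by simpa using h2smul c x y } (C * ‖x‖)
    (fun y => by simpa [mul_assoc] using hC x y) with hFdef
  have hFapply : ∀ x y, F x y = ω x y := fun x y => rfl
  -- the duality map T
  have hFbound : ∀ x : X, ‖F x‖ ≤ C * ‖x‖ := by
    intro x
    refine ContinuousLinearMap.opNorm_le_bound _ (by positivity) (fun y => ?_)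
    rw [hFapply]
    simpa [mul_assoc] using hC x y
  set T : X →L[ℂ] (X →SL[starRingEnd ℂ] ℂ) := LinearMap.mkContinuous
    { toFun := F,
      map_add' := fun x y => by
        ext z
        simp only [ContinuousLinearMap.add_apply, hFapply]
        exact h1add x y z,
      map_smul' := fun c x => by
        ext z
        simp only [RingHom.id_apply, ContinuousLinearMap.smul_apply, hFapply, smul_eq_mul]
        exact h1smul c x z }
    C hFbound with hTdef
  have hTapply : ∀ x y, T x y = ω x y := fun x y => rfl
  have hker : LinearMap.ker (T : X →ₗ[ℂ] (X →SL[starRingEnd ℂ] ℂ)) = ⊥ := by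
    rw [LinearMap.ker_eq_bot']
    intro x hx
    refine hnondeg x (fun y => ?_)
    have : T x y = 0 := by rw [show T x = 0 from hx]; rfl
    rwa [hTapply] at this
  have hrange : LinearMap.range (T : X →ₗ[ℂ] (X →SL[starRingEnd ℂ] ℂ)) = ⊤ := by
    rw [LinearMap.range_eq_top]
    intro f
    obtain ⟨x, hx⟩ := hstrong f
    exact ⟨x, by ext y; show T x y = f y; rw [hTapply]; exact hx y⟩
  set e := ContinuousLinearEquiv.ofBijective T hker hrange with hedef
  set M : ℝ := ‖(e.symm : (X →SL[starRingEnd ℂ] ℂ) →L[ℂ] X)‖ with hMdef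
  have hMnn : 0 ≤ M := norm_nonneg _
  have hM : ∀ x : X, ‖x‖ ≤ M * ‖T x‖ := by
    intro x
    have h1 : e.symm (T x) = x :=
      ContinuousLinearEquiv.ofBijective_symm_apply_apply T hker hrange x
    calc ‖x‖ = ‖e.symm (T x)‖ := by rw [h1]
    _ ≤ M * ‖T x‖ :=
      (e.symm : (X →SL[starRingEnd ℂ] ℂ) →L[ℂ] X).le_opNorm (T x)
  clear hedef hMdef hTdef hFdef
  clear_value M e T F
  -- definiteness helpers
  have hPzero : ∀ p ∈ Xp, ω p p = 0 → p = 0 := by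
    intro p hp h0
    by_contra hne
    have := hpos p hp hne
    rw [h0] at this
    simp at this
  have hMzero : ∀ m ∈ Xm, ω m m = 0 → m = 0 := by
    intro m hm h0
    by_contra hne
    have := hneg m hm hne
    rw [h0] at this
    simp at this
  -- Xm is closed
  have hXm_eq : (Xm : Set X) = ⋂ (u : Xp), {y : X | ω (u : X) y = 0} := by
    ext y
    simp only [Set.mem_iInter, Set.mem_setOf_eq, SetLike.mem_coe]
    constructor
    · intro hy u
      exact horth u u.2 y hy
    · intro hy
      have hytop : y ∈ Xp ⊔ Xm := by rw [hsup]; trivial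
      obtain ⟨p, hp, m, hm, rfl⟩ := Submodule.mem_sup.1 hytop
      have hpp : ω p p = 0 := by
        have h1 := hy ⟨p, hp⟩
        have h2 : ω p (p + m) = ω p p + ω p m := h2add p p m
        rw [horth p hp m hm] at h2
        simp only [add_zero] at h2
        rw [← h2]; exact h1
      have : p = 0 := hPzero p hp hpp
      simpa [this] using hm
  have hXmclosed : IsClosed (Xm : Set X) := by
    rw [hXm_eq]
    refine isClosed_iInter (fun u => ?_)
    have : {y : X | ω (u : X) y = 0} = (F (u : X)) ⁻¹' {0} := by
      ext y; simp [hFapply]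
    rw [this]
    exact IsClosed.preimage (F (u : X)).continuous isClosed_singleton
  -- Xp is closed
  have hXp_eq : (Xp : Set X) = ⋂ (m : Xm), {x : X | ω (m : X) x = 0} := by
    ext x
    simp only [Set.mem_iInter, Set.mem_setOf_eq, SetLike.mem_coe]
    constructor
    · intro hx m
      rw [hskew x (m : X), horth x hx m m.2]
      simp
    · intro hx
      have hxtop : x ∈ Xp ⊔ Xm := by rw [hsup]; trivial
      obtain ⟨p, hp, m, hm, rfl⟩ := Submodule.mem_sup.1 hxtop
      have hxm : ω (p + m) m = 0 := by
        have h1 := hx ⟨m, hm⟩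
        rw [hskew m (p + m), h1]
        simp
      have hmm : ω m m = 0 := by
        have h2 : ω (p + m) m = ω p m + ω m m := h1add p m m
        rw [horth p hp m hm] at h2
        simp only [zero_add] at h2
        rw [← h2]; exact hxm
      have : m = 0 := hMzero m hm hmm
      simpa [this] using hp
  have hXpclosed : IsClosed (Xp : Set X) := by
    rw [hXp_eq]
    refine isClosed_iInter (fun m => ?_)
    have : {x : X | ω (m : X) x = 0} = (F (m : X)) ⁻¹' {0} := by
      ext x; simp [hFapply]
    rw [this]
    exact IsClosed.preimage (F (m : X)).continuous isClosed_singleton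
  -- complementedness and bounded projections
  have hisCompl : IsCompl Xp Xm := ⟨disjoint_iff.2 hinf, codisjoint_iff.2 hsup⟩
  set Pp : X →L[ℂ] Xp := Xp.linearProjOfClosedCompl Xm hisCompl hXpclosed hXmclosed
    with hPpdef
  set Pm : X →L[ℂ] Xm := Xm.linearProjOfClosedCompl Xp hisCompl.symm hXmclosed hXpclosed
    with hPmdef
  set ppf : X →L[ℂ] X := Xp.subtypeL.comp Pp with hppfdef
  set pmf : X →L[ℂ] X := Xm.subtypeL.comp Pm with hpmfdef
  have hppf_mem : ∀ x : X, ppf x ∈ Xp := fun x => (Pp x).2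
  have hpmf_mem : ∀ x : X, pmf x ∈ Xm := fun x => (Pm x).2
  have hppf_left : ∀ x ∈ Xp, ppf x = x := by
    intro x hx
    show ((Pp x : Xp) : X) = x
    rw [hPpdef]
    rw [show (Xp.linearProjOfClosedCompl Xm hisCompl hXpclosed hXmclosed) x
        = Xp.projectionOnto Xm hisCompl x from rfl]
    rw [show x = ((⟨x, hx⟩ : Xp) : X) from rfl,
      Submodule.projectionOnto_apply_left hisCompl ⟨x, hx⟩]
  have hppf_right : ∀ x ∈ Xm, ppf x = 0 := by
    intro x hx
    show ((Pp x : Xp) : X) = 0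
    rw [hPpdef]
    rw [show (Xp.linearProjOfClosedCompl Xm hisCompl hXpclosed hXmclosed) x
        = Xp.projectionOnto Xm hisCompl x from rfl]
    rw [show x = ((⟨x, hx⟩ : Xm) : X) from rfl, Submodule.projectionOnto_apply_right hisCompl ⟨x, hx⟩]
    rfl
  have hpmf_left : ∀ x ∈ Xm, pmf x = x := by
    intro x hx
    show ((Pm x : Xm) : X) = x
    rw [hPmdef]
    rw [show (Xm.linearProjOfClosedCompl Xp hisCompl.symm hXmclosed hXpclosed) x
        = Xm.projectionOnto Xp hisCompl.symm x from rfl]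
    rw [show x = ((⟨x, hx⟩ : Xm) : X) from rfl,
      Submodule.projectionOnto_apply_left hisCompl.symm ⟨x, hx⟩]
  have hpmf_right : ∀ x ∈ Xp, pmf x = 0 := by
    intro x hx
    show ((Pm x : Xm) : X) = 0
    rw [hPmdef]
    rw [show (Xm.linearProjOfClosedCompl Xp hisCompl.symm hXmclosed hXpclosed) x
        = Xm.projectionOnto Xp hisCompl.symm x from rfl]
    rw [show x = ((⟨x, hx⟩ : Xp) : X) from rfl, Submodule.projectionOnto_apply_right hisCompl.symm ⟨x, hx⟩]
    rfl
  have hdecomp : ∀ x : X, ppf x + pmf x = x := by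
    intro x
    have hxtop : x ∈ Xp ⊔ Xm := by rw [hsup]; trivial
    obtain ⟨p, hp, m, hm, rfl⟩ := Submodule.mem_sup.1 hxtop
    rw [map_add, map_add, hppf_left p hp, hppf_right m hm, hpmf_right p hp, hpmf_left m hm]
    abel
  clear hppfdef hpmfdef hPpdef hPmdef
  clear_value ppf pmf Pp Pm
  -- quadratic forms
  set Q : X → ℝ := fun x => (-Complex.I * ω x x).re with hQdef
  set R : X → ℝ := fun y => (Complex.I * ω y y).re with hRdef
  have hRQ : ∀ x : X, R x = -Q x := by
    intro x
    simp only [hQdef, hRdef, Complex.mul_re, Complex.neg_re, Complex.neg_im,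
      Complex.I_re, Complex.I_im]
    ring
  have hQ0 : ∀ u ∈ Xp, 0 ≤ Q u := by
    intro u hu
    rcases eq_or_ne u 0 with rfl | hne
    · simp [hQdef, hz1]
    · exact le_of_lt (hpos u hu hne)
  have hR0 : ∀ y ∈ Xm, 0 ≤ R y := by
    intro y hy
    rcases eq_or_ne y 0 with rfl | hne
    · simp [hRdef, hz1]
    · rw [hRQ]
      have := hneg y hy hne
      rw [hQdef] at *
      linarith
  have hQupper : ∀ x : X, Q x ≤ C * (‖x‖ * ‖x‖) := by
    intro x
    calc Q x ≤ ‖-Complex.I * ω x x‖ := Complex.re_le_norm _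
    _ = ‖ω x x‖ := by
        rw [norm_mul]
        simp
    _ ≤ C * ‖x‖ * ‖x‖ := by exact hC x x
    _ = C * (‖x‖ * ‖x‖) := by ring
  have hRupper : ∀ x : X, R x ≤ C * (‖x‖ * ‖x‖) := by
    intro x
    calc R x ≤ ‖Complex.I * ω x x‖ := Complex.re_le_norm _
    _ = ‖ω x x‖ := by
        rw [norm_mul]
        simp
    _ ≤ C * ‖x‖ * ‖x‖ := by exact hC x x
    _ = C * (‖x‖ * ‖x‖) := by ring
  have hexpand : ∀ (x y : X) (t : ℂ), ω (x + t•y) (x + t•y)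
      = ω x x + starRingEnd ℂ t * ω x y + t * ω y x
        + t * starRingEnd ℂ t * ω y y := by
    intro x y t
    rw [h1add, h2add, h2add, h1smul, h1smul, h2smul, h2smul]
    ring
  have hCSp : ∀ u ∈ Xp, ∀ p ∈ Xp, Complex.normSq (ω u p) ≤ Q u * Q p := by
    intro u hu p hp
    have hb : Complex.normSq (Complex.I * starRingEnd ℂ (ω u p))
        = Complex.normSq (ω u p) := by
      simp [Complex.normSq_mul]
    rw [← hb]
    refine cs_aux _ _ _ (hQ0 u hu) (hQ0 p hp) (fun t => ?_)
    have hmem : u + t • p ∈ Xp := Xp.add_mem hu (Xp.smul_mem t hp)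
    have h0 := hQ0 _ hmem
    have he : Q (u + t • p) = Q u
        + 2 * (t * (Complex.I * starRingEnd ℂ (ω u p))).re
        + Complex.normSq t * Q p := by
      simp only [hQdef]
      rw [hexpand u p t, hskew u p]
      simp only [Complex.mul_re, Complex.mul_im, Complex.add_re, Complex.add_im,
        Complex.neg_re, Complex.neg_im, Complex.I_re, Complex.I_im,
        Complex.normSq_apply, Complex.conj_re, Complex.conj_im]
      ring
    rw [← he]
    exact h0
  have hCSm : ∀ y ∈ Xm, ∀ z ∈ Xm, Complex.normSq (ω y z) ≤ R y * R z := by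
    intro y hy z hz
    have hb : Complex.normSq (-Complex.I * starRingEnd ℂ (ω y z))
        = Complex.normSq (ω y z) := by
      simp [Complex.normSq_mul]
    rw [← hb]
    refine cs_aux _ _ _ (hR0 y hy) (hR0 z hz) (fun t => ?_)
    have hmem : y + t • z ∈ Xm := Xm.add_mem hy (Xm.smul_mem t hz)
    have h0 := hR0 _ hmem
    have he : R (y + t • z) = R y
        + 2 * (t * (-Complex.I * starRingEnd ℂ (ω y z))).re
        + Complex.normSq t * R z := by
      simp only [hRdef]
      rw [hexpand y z t, hskew y z]
      simp only [Complex.mul_re, Complex.mul_im, Complex.add_re, Complex.add_im,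
        Complex.neg_re, Complex.neg_im, Complex.I_re, Complex.I_im,
        Complex.normSq_apply, Complex.conj_re, Complex.conj_im]
      ring
    rw [← he]
    exact h0
  -- sqrt of C
  set sC : ℝ := Real.sqrt C with hsCdef
  have hsC0 : 0 ≤ sC := Real.sqrt_nonneg _
  have hsqQ : ∀ p ∈ Xp, Real.sqrt (Q p) ≤ sC * ‖p‖ := by
    intro p hp
    have h1 : Q p ≤ (sC * ‖p‖) ^ 2 := by
      rw [mul_pow, hsCdef, Real.sq_sqrt hCpos.le]
      have := hQupper p
      nlinarith [norm_nonneg p]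
    calc Real.sqrt (Q p) ≤ Real.sqrt ((sC * ‖p‖) ^ 2) := Real.sqrt_le_sqrt h1
    _ = sC * ‖p‖ := Real.sqrt_sq (by positivity)
  have hsqR : ∀ p ∈ Xm, Real.sqrt (R p) ≤ sC * ‖p‖ := by
    intro p hp
    have h1 : R p ≤ (sC * ‖p‖) ^ 2 := by
      rw [mul_pow, hsCdef, Real.sq_sqrt hCpos.le]
      have := hRupper p
      nlinarith [norm_nonneg p]
    calc Real.sqrt (R p) ≤ Real.sqrt ((sC * ‖p‖) ^ 2) := Real.sqrt_le_sqrt h1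
    _ = sC * ‖p‖ := Real.sqrt_sq (by positivity)
  -- lower bound on Xp
  have hlowP : ∀ u ∈ Xp, ‖u‖ ≤ (M * (sC * ‖ppf‖)) * Real.sqrt (Q u) := by
    intro u hu
    have hTle : ‖T u‖ ≤ (sC * ‖ppf‖) * Real.sqrt (Q u) := by
      refine ContinuousLinearMap.opNorm_le_bound _ (by positivity) (fun y => ?_)
      rw [hTapply]
      have heq : ω u y = ω u (ppf y) := by
        conv_lhs => rw [← hdecomp y]
        rw [h2add, horth u hu (pmf y) (hpmf_mem y), add_zero]
      rw [heq, Complex.norm_def]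
      calc Real.sqrt (Complex.normSq (ω u (ppf y)))
          ≤ Real.sqrt (Q u * Q (ppf y)) :=
            Real.sqrt_le_sqrt (hCSp u hu (ppf y) (hppf_mem y))
      _ = Real.sqrt (Q u) * Real.sqrt (Q (ppf y)) := Real.sqrt_mul (hQ0 u hu) _
      _ ≤ Real.sqrt (Q u) * (sC * ‖ppf y‖) := by
          have := hsqQ (ppf y) (hppf_mem y)
          have h2 : (0:ℝ) ≤ Real.sqrt (Q u) := Real.sqrt_nonneg _
          nlinarith
      _ ≤ Real.sqrt (Q u) * (sC * (‖ppf‖ * ‖y‖)) := by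
          have h3 := ppf.le_opNorm y
          have h2 : (0:ℝ) ≤ Real.sqrt (Q u) := Real.sqrt_nonneg _
          exact mul_le_mul_of_nonneg_left
            (mul_le_mul_of_nonneg_left h3 hsC0) h2
      _ = (sC * ‖ppf‖) * Real.sqrt (Q u) * ‖y‖ := by ring
    calc ‖u‖ ≤ M * ‖T u‖ := hM u
    _ ≤ M * ((sC * ‖ppf‖) * Real.sqrt (Q u)) := by nlinarith [norm_nonneg (T u)]
    _ = (M * (sC * ‖ppf‖)) * Real.sqrt (Q u) := by ring
  -- lower bound on Xm
  have hlowM : ∀ u ∈ Xm, ‖u‖ ≤ (M * (sC * ‖pmf‖)) * Real.sqrt (R u) := by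
    intro u hu
    have hTle : ‖T u‖ ≤ (sC * ‖pmf‖) * Real.sqrt (R u) := by
      refine ContinuousLinearMap.opNorm_le_bound _ (by positivity) (fun y => ?_)
      rw [hTapply]
      have heq : ω u y = ω u (pmf y) := by
        conv_lhs => rw [← hdecomp y]
        rw [h2add]
        have h4 : ω u (ppf y) = 0 := by
          rw [hskew (ppf y) u, horth (ppf y) (hppf_mem y) u hu]
          simp
        rw [h4, zero_add]
      rw [heq, Complex.norm_def]
      calc Real.sqrt (Complex.normSq (ω u (pmf y)))
          ≤ Real.sqrt (R u * R (pmf y)) :=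
            Real.sqrt_le_sqrt (hCSm u hu (pmf y) (hpmf_mem y))
      _ = Real.sqrt (R u) * Real.sqrt (R (pmf y)) := Real.sqrt_mul (hR0 u hu) _
      _ ≤ Real.sqrt (R u) * (sC * ‖pmf y‖) := by
          have := hsqR (pmf y) (hpmf_mem y)
          have h2 : (0:ℝ) ≤ Real.sqrt (R u) := Real.sqrt_nonneg _
          nlinarith
      _ ≤ Real.sqrt (R u) * (sC * (‖pmf‖ * ‖y‖)) := by
          have h3 := pmf.le_opNorm y
          have h2 : (0:ℝ) ≤ Real.sqrt (R u) := Real.sqrt_nonneg _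
          exact mul_le_mul_of_nonneg_left
            (mul_le_mul_of_nonneg_left h3 hsC0) h2
      _ = (sC * ‖pmf‖) * Real.sqrt (R u) * ‖y‖ := by ring
    calc ‖u‖ ≤ M * ‖T u‖ := hM u
    _ ≤ M * ((sC * ‖pmf‖) * Real.sqrt (R u)) := by nlinarith [norm_nonneg (T u)]
    _ = (M * (sC * ‖pmf‖)) * Real.sqrt (R u) := by ring
  -- graph membership and the key identity Q v = R (U v)
  have hlam_mem : ∀ v : ↥dom, (v : X) + U v ∈ lam := by
    intro v
    have : ((v:X) + U v) ∈ (lam : Set X) := by rw [hgraph]; exact ⟨v, rfl⟩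
    exact this
  have hQRv : ∀ v : ↥dom, Q (v : X) = R (U v) := by
    intro v
    have h0 : ω ((v:X) + U v) ((v:X) + U v) = 0 :=
      hiso (hlam_mem v) _ (hlam_mem v)
    have h1 : ω ((v:X) + U v) ((v:X) + U v)
        = ω (v:X) (v:X) + ω (U v) (U v) := by
      rw [h1add, h2add, h2add]
      rw [horth (v:X) (hdom v.2) (U v) (hUran v)]
      have h2 : ω (U v) (v:X) = 0 := by
        rw [hskew (v:X) (U v), horth (v:X) (hdom v.2) (U v) (hUran v)]
        simp
      rw [h2]
      ring
    have h3 : ω (U v) (U v) = - ω (v:X) (v:X) := by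
      rw [h1] at h0
      linear_combination h0
    simp only [hQdef, hRdef, h3]
    simp only [Complex.mul_re, Complex.neg_re, Complex.neg_im,
      Complex.I_re, Complex.I_im]
    ring
  -- the operator bounds
  set ka : ℝ := (M * (sC * ‖ppf‖)) * sC with hkadef
  set kb : ℝ := (M * (sC * ‖pmf‖)) * sC with hkbdef
  have hka0 : 0 ≤ ka := by rw [hkadef]; positivity
  have hkb0 : 0 ≤ kb := by rw [hkbdef]; positivity
  have hUb : ∀ v : ↥dom, ‖U v‖ ≤ kb * ‖(v:X)‖ := by
    intro v
    calc ‖U v‖ ≤ (M * (sC * ‖pmf‖)) * Real.sqrt (R (U v)) := hlowM _ (hUran v)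
    _ = (M * (sC * ‖pmf‖)) * Real.sqrt (Q (v:X)) := by rw [hQRv]
    _ ≤ (M * (sC * ‖pmf‖)) * (sC * ‖(v:X)‖) :=
        mul_le_mul_of_nonneg_left (hsqQ _ (hdom v.2)) (by positivity)
    _ = kb * ‖(v:X)‖ := by rw [hkbdef]; ring
  have hUlb : ∀ v : ↥dom, ‖(v:X)‖ ≤ ka * ‖U v‖ := by
    intro v
    calc ‖(v:X)‖ ≤ (M * (sC * ‖ppf‖)) * Real.sqrt (Q (v:X)) := hlowP _ (hdom v.2)
    _ = (M * (sC * ‖ppf‖)) * Real.sqrt (R (U v)) := by rw [hQRv]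
    _ ≤ (M * (sC * ‖ppf‖)) * (sC * ‖U v‖) :=
        mul_le_mul_of_nonneg_left (hsqR _ (hUran v)) (by positivity)
    _ = ka * ‖U v‖ := by rw [hkadef]; ring
  clear hkadef hkbdef
  clear_value ka kb
  -- closedness of dom
  have hdomclosed : IsClosed (dom : Set X) := by
    apply IsSeqClosed.isClosed
    intro x p hx hp
    set v : ℕ → ↥dom := fun n => ⟨x n, hx n⟩ with hvdef
    have hcx : CauchySeq x := hp.cauchySeq
    have hcw : CauchySeq (fun n => U (v n)) := by
      refine cauchy_transfer x _ (kb + 1) (by positivity) (fun m n => ?_) hcx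
      rw [dist_eq_norm, dist_eq_norm, ← map_sub]
      have h5 : ((v m - v n : ↥dom) : X) = x m - x n := rfl
      calc ‖U (v m - v n)‖ ≤ kb * ‖((v m - v n : ↥dom) : X)‖ := hUb _
      _ = kb * ‖x m - x n‖ := by rw [h5]
      _ ≤ (kb + 1) * ‖x m - x n‖ := by nlinarith [norm_nonneg (x m - x n)]
    obtain ⟨y, hy⟩ := cauchySeq_tendsto_of_complete hcw
    have hsum : Filter.Tendsto (fun n => x n + U (v n)) Filter.atTop (nhds (p + y)) :=
      hp.add hy
    have hpy : p + y ∈ (lam : Set X) :=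
      hclosed.mem_of_tendsto hsum (Filter.Eventually.of_forall (fun n => by
        rw [hgraph]; exact ⟨v n, rfl⟩))
    rw [hgraph] at hpy
    obtain ⟨w₀, hw₀⟩ := hpy
    have hpXp : p ∈ Xp := hXpclosed.mem_of_tendsto hp
      (Filter.Eventually.of_forall (fun n => hdom (hx n)))
    have hyXm : y ∈ Xm := hXmclosed.mem_of_tendsto hy
      (Filter.Eventually.of_forall (fun n => hUran (v n)))
    have hsub : p - (w₀ : X) = U w₀ - y := by
      rw [sub_eq_sub_iff_add_eq_add, hw₀]
      abel
    have hmem0 : p - (w₀ : X) ∈ Xp ⊓ Xm :=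
      ⟨sub_mem hpXp (hdom w₀.2), by rw [hsub]; exact sub_mem (hUran w₀) hyXm⟩
    rw [hinf, Submodule.mem_bot] at hmem0
    have hpw : p = (w₀ : X) := by rwa [sub_eq_zero] at hmem0
    show p ∈ dom
    rw [hpw]
    exact w₀.2
  -- closedness of the range
  have hranclosed : IsClosed (Set.range fun v : ↥dom => U v) := by
    apply IsSeqClosed.isClosed
    intro x p hx hp
    choose v hv using hx
    have hv' : ∀ n, U (v n) = x n := hv
    have hcx : CauchySeq x := hp.cauchySeq
    have hcv : CauchySeq (fun n => ((v n : X))) := by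
      refine cauchy_transfer x _ (ka + 1) (by positivity) (fun m n => ?_) hcx
      rw [dist_eq_norm, dist_eq_norm]
      have h5 : (v m : X) - (v n : X) = ((v m - v n : ↥dom) : X) := rfl
      rw [h5]
      calc ‖((v m - v n : ↥dom) : X)‖ ≤ ka * ‖U (v m - v n)‖ := hUlb _
      _ = ka * ‖x m - x n‖ := by rw [map_sub, hv' m, hv' n]
      _ ≤ (ka + 1) * ‖x m - x n‖ := by nlinarith [norm_nonneg (x m - x n)]
    obtain ⟨q, hq⟩ := cauchySeq_tendsto_of_complete hcv
    have hsum : Filter.Tendsto (fun n => ((v n : X)) + x n) Filter.atTop (nhds (q + p)) :=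
      hq.add hp
    have hqp : q + p ∈ (lam : Set X) :=
      hclosed.mem_of_tendsto hsum (Filter.Eventually.of_forall (fun n => by
        rw [hgraph]
        exact ⟨v n, by rw [hv' n]⟩))
    rw [hgraph] at hqp
    obtain ⟨w₀, hw₀⟩ := hqp
    have hqXp : q ∈ Xp := hXpclosed.mem_of_tendsto hq
      (Filter.Eventually.of_forall (fun n => hdom (v n).2))
    have hpXm : p ∈ Xm := hXmclosed.mem_of_tendsto hp
      (Filter.Eventually.of_forall (fun n => hv' n ▸ hUran (v n)))
    have hsub : q - (w₀ : X) = U w₀ - p := by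
      rw [sub_eq_sub_iff_add_eq_add, hw₀]
      abel
    have hmem0 : q - (w₀ : X) ∈ Xp ⊓ Xm :=
      ⟨sub_mem hqXp (hdom w₀.2), by rw [hsub]; exact sub_mem (hUran w₀) hpXm⟩
    rw [hinf, Submodule.mem_bot] at hmem0
    have hqw : q = (w₀ : X) := by rwa [sub_eq_zero] at hmem0
    have hpU : p = U w₀ := by
      have h6 := hw₀
      rw [hqw] at h6
      exact add_left_cancel h6
    exact ⟨w₀, hpU.symm⟩
  refine ⟨hdomclosed, hranclosed, fun hLag => ?_⟩
  -- helper: an element annihilating lam lies in lam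
  have hann : ∀ x₀ : X, (∀ v : ↥dom, ω x₀ ((v:X) + U v) = 0) → x₀ ∈ (lam : Set X) := by
    intro x₀ h
    rw [hLag]
    intro z hz
    rw [hgraph] at hz
    obtain ⟨v, rfl⟩ := hz
    rw [hskew x₀ ((v:X) + U v), h v]
    simp
  -- a conjugate-linear functional out of a linear one, and the dual element
  have hfun : ∀ g : X →L[ℂ] ℂ, ∃ x₀ : X, ∀ y : X, ω x₀ y = starRingEnd ℂ (g y) := by
    intro g
    have hb : ∀ y : X, ‖starRingEnd ℂ (g y)‖ ≤ ‖g‖ * ‖y‖ := by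
      intro y
      rw [RCLike.norm_conj]
      exact g.le_opNorm y
    obtain ⟨x₀, hx₀⟩ := hstrong (LinearMap.mkContinuous
      { toFun := fun y => starRingEnd ℂ (g y),
        map_add' := fun y z => by simp,
        map_smul' := fun c y => by simp } ‖g‖ hb)
    exact ⟨x₀, fun y => hx₀ y⟩
  constructor
  · -- dom = Xp
    refine le_antisymm hdom ?_
    intro u huXp
    by_contra hu
    have hWeq : ((dom ⊔ Xm : Submodule ℂ X) : Set X) = ppf ⁻¹' (dom : Set X) := by
      ext z
      simp only [Set.mem_preimage, SetLike.mem_coe]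
      constructor
      · intro hz
        obtain ⟨d, hd, m, hm, rfl⟩ := Submodule.mem_sup.1 hz
        rw [map_add, hppf_left d (hdom hd), hppf_right m hm, add_zero]
        exact hd
      · intro hz
        exact Submodule.mem_sup.2 ⟨ppf z, hz, pmf z, hpmf_mem z, hdecomp z⟩
    have hWclosed : IsClosed ((dom ⊔ Xm : Submodule ℂ X) : Set X) := by
      rw [hWeq]
      exact hdomclosed.preimage ppf.continuous
    have hnotin : u ∉ (dom ⊔ Xm : Submodule ℂ X) := by
      intro hmem
      obtain ⟨d, hd, m, hm, heq⟩ := Submodule.mem_sup.1 hmem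
      have h8 : u - d = m := by rw [← heq]; abel
      have h7 : u - d ∈ Xp ⊓ Xm :=
        ⟨sub_mem huXp (hdom hd), by rw [h8]; exact hm⟩
      rw [hinf, Submodule.mem_bot, sub_eq_zero] at h7
      exact hu (h7 ▸ hd)
    obtain ⟨g, hgW, hgu⟩ := sep_functional _ hWclosed hnotin
    obtain ⟨x₀, hx₀⟩ := hfun g
    have hx₀lam : x₀ ∈ (lam : Set X) := by
      refine hann x₀ (fun v => ?_)
      rw [hx₀, map_add,
        hgW _ (Submodule.mem_sup_left v.2),
        hgW _ (Submodule.mem_sup_right (hUran v))]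
      simp
    rw [hgraph] at hx₀lam
    obtain ⟨w₀, hw₀⟩ := hx₀lam
    have hUw0 : ω x₀ (U w₀) = 0 := by
      rw [hx₀, hgW _ (Submodule.mem_sup_right (hUran w₀)), map_zero]
    have hexp : ω x₀ (U w₀) = ω (U w₀) (U w₀) := by
      rw [hw₀, h1add, horth _ (hdom w₀.2) _ (hUran w₀), zero_add]
    have hUw0' : U w₀ = 0 := hMzero _ (hUran w₀) (by rw [← hexp, hUw0])
    have hw00 : w₀ = (0 : ↥dom) := hUinj (by rw [hUw0', map_zero])
    have hx00 : x₀ = 0 := by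
      rw [hw₀, hw00]
      simp
    have hzero : ω x₀ u = 0 := by rw [hx00]; exact hz1 u
    rw [hx₀ u, starRingEnd_apply, star_eq_zero] at hzero
    exact hgu hzero
  refine ⟨?_, ⟨kb, hUb⟩, ⟨(ka + 1)⁻¹, by positivity, fun v => ?_⟩⟩
  · -- range U = Xm
    refine Set.Subset.antisymm ?_ ?_
    · rintro _ ⟨v, rfl⟩
      exact hUran v
    · intro y hyXm
      by_contra hy
      have hSeq : ((LinearMap.range U : Submodule ℂ X) : Set X)
          = Set.range fun v : ↥dom => U v := by
        ext z
        simp [LinearMap.mem_range]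
      have hranXm : ∀ r ∈ LinearMap.range U, r ∈ Xm := by
        intro r hr
        obtain ⟨vr, rfl⟩ := hr
        exact hUran vr
      have hWeq : ((LinearMap.range U ⊔ Xp : Submodule ℂ X) : Set X)
          = pmf ⁻¹' ((LinearMap.range U : Submodule ℂ X) : Set X) := by
        ext z
        simp only [Set.mem_preimage, SetLike.mem_coe]
        constructor
        · intro hz
          obtain ⟨r, hr, p, hp, rfl⟩ := Submodule.mem_sup.1 hz
          rw [map_add, hpmf_left r (hranXm r hr), hpmf_right p hp, add_zero]
          exact hr
        · intro hz
          refine Submodule.mem_sup.2 ⟨pmf z, hz, ppf z, hppf_mem z, ?_⟩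
          rw [add_comm]
          exact hdecomp z
      have hWclosed : IsClosed ((LinearMap.range U ⊔ Xp : Submodule ℂ X) : Set X) := by
        rw [hWeq]
        refine IsClosed.preimage pmf.continuous ?_
        rw [hSeq]
        exact hranclosed
      have hnotin : y ∉ (LinearMap.range U ⊔ Xp : Submodule ℂ X) := by
        intro hmem
        obtain ⟨r, hr, p, hp, heq⟩ := Submodule.mem_sup.1 hmem
        have h8 : y - r = p := by rw [← heq]; abel
        have h7 : y - r ∈ Xp ⊓ Xm :=
          ⟨by rw [h8]; exact hp, sub_mem hyXm (hranXm r hr)⟩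
        rw [hinf, Submodule.mem_bot, sub_eq_zero] at h7
        obtain ⟨vr, hvr⟩ := hr
        refine hy ⟨vr, ?_⟩
        show U vr = y
        rw [hvr, h7]
      obtain ⟨g, hgW, hgy⟩ := sep_functional _ hWclosed hnotin
      obtain ⟨x₀, hx₀⟩ := hfun g
      have hx₀lam : x₀ ∈ (lam : Set X) := by
        refine hann x₀ (fun v => ?_)
        rw [hx₀, map_add,
          hgW _ (Submodule.mem_sup_right (hdom v.2)),
          hgW _ (Submodule.mem_sup_left ⟨v, rfl⟩)]
        simp
      rw [hgraph] at hx₀lam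
      obtain ⟨w₀, hw₀⟩ := hx₀lam
      have hUw0 : ω x₀ (w₀ : X) = 0 := by
        rw [hx₀, hgW _ (Submodule.mem_sup_right (hdom w₀.2)), map_zero]
      have hexp : ω x₀ (w₀ : X) = ω (w₀ : X) (w₀ : X) := by
        rw [hw₀, h1add]
        have h9 : ω (U w₀) (w₀ : X) = 0 := by
          rw [hskew (w₀ : X) (U w₀), horth _ (hdom w₀.2) _ (hUran w₀)]
          simp
        rw [h9, add_zero]
      have hw0' : (w₀ : X) = 0 := hPzero _ (hdom w₀.2) (by rw [← hexp, hUw0])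
      have hw00 : w₀ = (0 : ↥dom) := Subtype.ext hw0'
      have hx00 : x₀ = 0 := by
        rw [hw₀, hw00]
        simp
      have hzero : ω x₀ y = 0 := by rw [hx00]; exact hz1 y
      rw [hx₀ y, starRingEnd_apply, star_eq_zero] at hzero
      exact hgy hzero
  · -- lower bound
    have h1 := hUlb v
    have h2 : ‖(v : X)‖ ≤ (ka + 1) * ‖U v‖ := by nlinarith [norm_nonneg (U v)]
    rw [inv_mul_le_iff₀ (by positivity)]
    exact h2
end

section
/- Let (X, ω) be a complex symplectic vector space and let λ, μ be isotropic subspaces with dim(λ ∩ μ) < ∞ and dim X/(λ + μ) < ∞ and index(λ, μ) := dim(λ ∩ μ) − dim X/(λ + μ) ≥ 0. Then λ and μ are Lagrangian subspaces of X, index(λ, μ) = 0, (λ + μ)^ω = λ ∩ μ, and (λ + μ)^{ωω} = λ + μ. -/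
/-- The annihilator `λ^ω` of a subspace `λ` with respect to a form `ω` that is additive and
conjugate-homogeneous in its second variable, as a subspace. -/
def annSub {X : Type*} [AddCommGroup X] [Module ℂ X] (ω : X → X → ℂ)
    (h2add : ∀ x y z : X, ω x (y + z) = ω x y + ω x z)
    (h2smul : ∀ (c : ℂ) (x y : X), ω x (c • y) = starRingEnd ℂ c * ω x y)
    (lam : Submodule ℂ X) : Submodule ℂ X where
  carrier := {y | ∀ x ∈ lam, ω x y = 0}
  add_mem' := by
    intro a b ha hb x hx
    rw [h2add, ha x hx, hb x hx, add_zero]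
  zero_mem' := by
    intro x _
    have h := h2add x 0 0
    rw [add_zero] at h
    exact left_eq_add.mp h
  smul_mem' := by
    intro c a ha x hx
    rw [h2smul, ha x hx, mul_zero]

/-- Let `(λ, μ)` be an algebraic Fredholm pair of isotropic subspaces of a
complex symplectic vector space with `index(λ,μ) ≥ 0`. Then `λ` and `μ` are Lagrangian,
`index(λ,μ) = 0`, `(λ+μ)^ω = λ ∩ μ` and `(λ+μ)^{ωω} = λ + μ`. -/
theorem isotropic_fredholm_pair_nonneg_index
    {X : Type*} [AddCommGroup X] [Module ℂ X]
    (ω : X → X → ℂ)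
    (h1add : ∀ x y z : X, ω (x + y) z = ω x z + ω y z)
    (h1smul : ∀ (c : ℂ) (x y : X), ω (c • x) y = c * ω x y)
    (h2add : ∀ x y z : X, ω x (y + z) = ω x y + ω x z)
    (h2smul : ∀ (c : ℂ) (x y : X), ω x (c • y) = starRingEnd ℂ c * ω x y)
    (hskew : ∀ x y : X, ω y x = -starRingEnd ℂ (ω x y))
    (hnondeg : ∀ x : X, (∀ y : X, ω x y = 0) → x = 0)
    (lam mu : Submodule ℂ X)
    -- λ and μ are isotropic
    (hlamiso : lam ≤ annSub ω h2add h2smul lam)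
    (hmuiso : mu ≤ annSub ω h2add h2smul mu)
    -- (λ, μ) is an algebraic Fredholm pair of non-negative index
    (hfin₁ : FiniteDimensional ℂ ↥(lam ⊓ mu))
    (hfin₂ : FiniteDimensional ℂ (X ⧸ (lam ⊔ mu)))
    (hidx : Module.finrank ℂ (X ⧸ (lam ⊔ mu)) ≤ Module.finrank ℂ ↥(lam ⊓ mu)) :
    -- λ and μ are Lagrangian
    lam = annSub ω h2add h2smul lam ∧
    mu = annSub ω h2add h2smul mu ∧
    -- index(λ, μ) = 0
    Module.finrank ℂ ↥(lam ⊓ mu) = Module.finrank ℂ (X ⧸ (lam ⊔ mu)) ∧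
    -- (λ+μ)^ω = λ ∩ μ
    annSub ω h2add h2smul (lam ⊔ mu) = lam ⊓ mu ∧
    -- (λ+μ)^{ωω} = λ + μ
    annSub ω h2add h2smul (annSub ω h2add h2smul (lam ⊔ mu)) = lam ⊔ mu := by
  classical
  have mem_ann : ∀ (p : Submodule ℂ X) (y : X),
      y ∈ annSub ω h2add h2smul p ↔ ∀ x ∈ p, ω x y = 0 := fun p y => Iff.rfl
  have hswap : ∀ x y : X, ω x y = 0 → ω y x = 0 := fun x y h => by
    rw [hskew, h, map_zero, neg_zero]
  -- the sesquilinear packaging of ω (semilinear in the second variable)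
  have Ωdef : ∀ y : X, ∃ f : X →ₛₗ[starRingEnd ℂ] ℂ, ∀ z, f z = ω y z := fun y =>
    ⟨{ toFun := ω y, map_add' := h2add y, map_smul' := fun c z => h2smul c y z },
      fun _ => rfl⟩
  choose Ω hΩ using Ωdef
  -- the linear functionals ω(·, z)
  have Λdef : ∀ z : X, ∃ f : X →ₗ[ℂ] ℂ, ∀ y, f y = ω y z := fun z =>
    ⟨{ toFun := fun y => ω y z, map_add' := fun a b => h1add a b z,
       map_smul' := fun c a => h1smul c a z }, fun _ => rfl⟩
  choose Λ hΛ using Λdef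
  -- dimension of the quotient and a basis with chosen lifts
  set b := Module.finrank ℂ (X ⧸ (lam ⊔ mu)) with hb
  set B := Module.finBasis ℂ (X ⧸ (lam ⊔ mu)) with hB
  obtain ⟨x, hx⟩ : ∃ x : Fin b → X, ∀ i, (lam ⊔ mu).mkQ (x i) = B i := by
    choose x hx using fun i => (lam ⊔ mu).mkQ_surjective (B i)
    exact ⟨x, hx⟩
  -- every vector decomposes as (element of λ+μ) + combination of the lifts
  have decomp : ∀ z : X, ∃ (w : X) (c : Fin b → ℂ),
      w ∈ lam ⊔ mu ∧ z = w + ∑ i, c i • x i := by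
    intro z
    refine ⟨z - ∑ i, B.repr ((lam ⊔ mu).mkQ z) i • x i,
      fun i => B.repr ((lam ⊔ mu).mkQ z) i, ?_, ?_⟩
    · have hmk : (lam ⊔ mu).mkQ (z - ∑ i, B.repr ((lam ⊔ mu).mkQ z) i • x i) = 0 := by
        rw [map_sub, map_sum]
        simp only [map_smul, hx]
        rw [B.sum_repr ((lam ⊔ mu).mkQ z), sub_self]
      have hker := LinearMap.mem_ker.mpr hmk
      rwa [Submodule.ker_mkQ] at hker
    · show z = z - (∑ i, B.repr ((lam ⊔ mu).mkQ z) i • x i) +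
        ∑ i, B.repr ((lam ⊔ mu).mkQ z) i • x i
      abel
  -- expansion of ω y z using the decomposition
  have expand : ∀ y z : X, (∀ w ∈ lam ⊔ mu, ω y w = 0) → (∀ i, ω y (x i) = 0) →
      ω y z = 0 := by
    intro y z hw hxi
    obtain ⟨w, c, hwmem, rfl⟩ := decomp z
    rw [h2add, hw w hwmem, zero_add, ← hΩ, map_sum]
    refine Finset.sum_eq_zero fun i _ => ?_
    rw [LinearMap.map_smulₛₗ, hΩ, hxi i, smul_zero]
  -- the coordinate map
  set L : X →ₗ[ℂ] (Fin b → ℂ) := LinearMap.pi (fun i => Λ (x i)) with hL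
  have hLapp : ∀ (y : X) (i : Fin b), L y i = ω y (x i) := fun y i => hΛ (x i) y
  -- y in (λ+μ)^ω kills λ+μ also in the first slot
  have hS2 : ∀ y ∈ annSub ω h2add h2smul (lam ⊔ mu), ∀ w ∈ lam ⊔ mu, ω y w = 0 :=
    fun y hy w hw => hswap w y (hy w hw)
  -- injectivity of L on (λ+μ)^ω
  have hLzero : ∀ y ∈ annSub ω h2add h2smul (lam ⊔ mu), L y = 0 → y = 0 := by
    intro y hy h0
    refine hnondeg y (fun z => expand y z (hS2 y hy) (fun i => ?_))
    have := congrFun h0 i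
    rwa [hLapp] at this
  have hinjS : Function.Injective
      (L.comp (annSub ω h2add h2smul (lam ⊔ mu)).subtype) := by
    rw [injective_iff_map_eq_zero]
    rintro ⟨y, hy⟩ h0
    exact Subtype.ext (hLzero y hy h0)
  haveI hfinS : FiniteDimensional ℂ ↥(annSub ω h2add h2smul (lam ⊔ mu)) :=
    FiniteDimensional.of_injective _ hinjS
  have hrankS : Module.finrank ℂ ↥(annSub ω h2add h2smul (lam ⊔ mu)) ≤ b := by
    have h := LinearMap.finrank_le_finrank_of_injective hinjS
    simpa using h
  -- λ∩μ ⊆ (λ+μ)^ω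
  have hinfS : lam ⊓ mu ≤ annSub ω h2add h2smul (lam ⊔ mu) := by
    intro v hv
    rw [mem_ann]
    intro w hw
    obtain ⟨p, hp, q, hq, rfl⟩ := Submodule.mem_sup.mp hw
    have h1 : ω p v = 0 := hlamiso hv.1 p hp
    have h2 : ω q v = 0 := hmuiso hv.2 q hq
    rw [h1add, h1, h2, add_zero]
  have hEq : lam ⊓ mu = annSub ω h2add h2smul (lam ⊔ mu) :=
    Submodule.eq_of_le_of_finrank_le hinfS (le_trans hrankS hidx)
  have hab : Module.finrank ℂ ↥(lam ⊓ mu) = b := by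
    refine le_antisymm ?_ hidx
    rw [hEq]; exact hrankS
  -- the coordinate map restricted to λ∩μ is surjective
  have hinjM : Function.Injective (L.comp (lam ⊓ mu).subtype) := by
    rw [injective_iff_map_eq_zero]
    rintro ⟨v, hv⟩ h0
    exact Subtype.ext (hLzero v (hinfS hv) h0)
  have hrangeM : LinearMap.range (L.comp (lam ⊓ mu).subtype) = ⊤ := by
    apply Submodule.eq_top_of_finrank_eq
    rw [LinearMap.finrank_range_of_inj hinjM, hab]
    simp
  -- (λ∩μ)^ω ⊆ λ+μ
  have hTle : ∀ z : X, (∀ v ∈ lam ⊓ mu, ω v z = 0) → z ∈ lam ⊔ mu := by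
    intro z hz
    obtain ⟨w, c, hwmem, hzeq⟩ := decomp z
    obtain ⟨v, hv⟩ := LinearMap.range_eq_top.mp hrangeM c
    have hvi : ∀ i, ω (v : X) (x i) = c i := by
      intro i
      have := congrFun hv i
      rwa [LinearMap.comp_apply, Submodule.subtype_apply, hLapp] at this
    have hvw : ω (v : X) w = 0 := hS2 (v : X) (hinfS v.2) w hwmem
    have h0 : ω (v : X) z = 0 := hz (v : X) v.2
    have hsum : (0 : ℂ) = ∑ i, (Complex.normSq (c i) : ℂ) := by
      rw [← h0, hzeq, h2add, hvw, zero_add, ← hΩ, map_sum]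
      refine Finset.sum_congr rfl fun i _ => ?_
      rw [LinearMap.map_smulₛₗ, hΩ, hvi i, smul_eq_mul,
        Complex.normSq_eq_conj_mul_self]
    have hsumR : ∑ i, Complex.normSq (c i) = 0 := by
      have : ((∑ i, Complex.normSq (c i) : ℝ) : ℂ) = 0 := by
        push_cast
        exact hsum.symm
      exact_mod_cast this
    have hc : ∀ i, c i = 0 := by
      intro i
      have := (Finset.sum_eq_zero_iff_of_nonneg
        (fun j _ => Complex.normSq_nonneg (c j))).mp hsumR i (Finset.mem_univ i)
      exact Complex.normSq_eq_zero.mp this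
    have : z = w := by
      rw [hzeq, Finset.sum_eq_zero (fun i _ => by rw [hc i, zero_smul]), add_zero]
    rwa [this]
  -- λ is Lagrangian
  have hlam : lam = annSub ω h2add h2smul lam := by
    refine le_antisymm hlamiso ?_
    intro y hy
    rw [mem_ann] at hy
    have hyT : y ∈ lam ⊔ mu := hTle y (fun v hv => hy v hv.1)
    obtain ⟨a, ha, b', hb', rfl⟩ := Submodule.mem_sup.mp hyT
    have hbS : b' ∈ annSub ω h2add h2smul (lam ⊔ mu) := by
      rw [mem_ann]
      intro w hw
      obtain ⟨p, hp, q, hq, rfl⟩ := Submodule.mem_sup.mp hw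
      have h1 : ω p b' = 0 := by
        have hpy : ω p (a + b') = 0 := hy p hp
        have hpa : ω p a = 0 := hlamiso ha p hp
        have h := h2add p a b'
        rw [hpy, hpa, zero_add] at h
        exact h.symm
      have h2 : ω q b' = 0 := hmuiso hb' q hq
      rw [h1add, h1, h2, add_zero]
    have hbinf : b' ∈ lam ⊓ mu := by rw [hEq]; exact hbS
    exact lam.add_mem ha hbinf.1
  -- μ is Lagrangian
  have hmu : mu = annSub ω h2add h2smul mu := by
    refine le_antisymm hmuiso ?_
    intro y hy
    rw [mem_ann] at hy
    have hyT : y ∈ lam ⊔ mu := hTle y (fun v hv => hy v hv.2)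
    obtain ⟨a, ha, b', hb', rfl⟩ := Submodule.mem_sup.mp hyT
    have haS : a ∈ annSub ω h2add h2smul (lam ⊔ mu) := by
      rw [mem_ann]
      intro w hw
      obtain ⟨p, hp, q, hq, rfl⟩ := Submodule.mem_sup.mp hw
      have h1 : ω p a = 0 := hlamiso ha p hp
      have h2 : ω q a = 0 := by
        have hqy : ω q (a + b') = 0 := hy q hq
        have hqb : ω q b' = 0 := hmuiso hb' q hq
        have h := h2add q a b'
        rw [hqy, hqb, add_zero] at h
        exact h.symm
      rw [h1add, h1, h2, add_zero]
    have hainf : a ∈ lam ⊓ mu := by rw [hEq]; exact haS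
    exact mu.add_mem hainf.2 hb'
  -- double annihilator
  have hfifth : annSub ω h2add h2smul (lam ⊓ mu) = lam ⊔ mu := by
    refine le_antisymm ?_ ?_
    · intro z hz
      rw [mem_ann] at hz
      exact hTle z hz
    · intro w hw
      rw [mem_ann]
      intro v hv
      exact hswap w v (hinfS hv w hw)
  refine ⟨hlam, hmu, hab, hEq.symm, ?_⟩
  rw [← hEq]
  exact hfifth
end

section
/- Let (X, ω) be a symplectic Banach space with a symplectic splitting X = X⁺ ⊕ X⁻, and let V : X⁺ → X⁻ be a bounded operator with bounded inverse such that the graph μ := {x + Vx : x ∈ X⁺} is an isotropic subspace of X. Then μ is a Lagrangian subspace of X. -/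
/-- In a symplectic Banach space with symplectic splitting `X = X⁺ ⊕ X⁻`,
if `V : X⁺ → X⁻` is a bounded operator with bounded inverse whose graph
`μ = {x + Vx : x ∈ X⁺}` is isotropic, then `μ` is Lagrangian. -/
theorem graph_of_bounded_invertible_is_lagrangian
    {X : Type*} [NormedAddCommGroup X] [NormedSpace ℂ X] [CompleteSpace X]
    (ω : X → X → ℂ)
    -- ω is linear in the first variable and conjugate linear in the second
    (h1add : ∀ x y z : X, ω (x + y) z = ω x z + ω y z)
    (h1smul : ∀ (c : ℂ) (x y : X), ω (c • x) y = c * ω x y)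
    (h2add : ∀ x y z : X, ω x (y + z) = ω x y + ω x z)
    (h2smul : ∀ (c : ℂ) (x y : X), ω x (c • y) = starRingEnd ℂ c * ω x y)
    -- ω is skew-symmetric, non-degenerate and bounded
    (hskew : ∀ x y : X, ω y x = -starRingEnd ℂ (ω x y))
    (hnondeg : ∀ x : X, (∀ y : X, ω x y = 0) → x = 0)
    (hbound : ∃ C : ℝ, ∀ x y : X, ‖ω x y‖ ≤ C * ‖x‖ * ‖y‖)
    -- symplectic splitting X = X⁺ ⊕ X⁻
    (Xp Xm : Submodule ℂ X)
    (hinf : Xp ⊓ Xm = ⊥) (hsup : Xp ⊔ Xm = ⊤)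
    (horth : ∀ x ∈ Xp, ∀ y ∈ Xm, ω x y = 0)
    (hpos : ∀ x ∈ Xp, x ≠ 0 → 0 < (-Complex.I * ω x x).re)
    (hneg : ∀ x ∈ Xm, x ≠ 0 → (-Complex.I * ω x x).re < 0)
    -- V : X⁺ → X⁻ is bounded with bounded inverse
    (V : ↥Xp →ₗ[ℂ] X)
    (hVm : ∀ x : ↥Xp, V x ∈ Xm)
    (hVbdd : ∃ C : ℝ, ∀ x : ↥Xp, ‖V x‖ ≤ C * ‖(x : X)‖)
    (hVsurj : ∀ y ∈ Xm, ∃ x : ↥Xp, V x = y)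
    (hVinvbdd : ∃ c > (0 : ℝ), ∀ x : ↥Xp, c * ‖(x : X)‖ ≤ ‖V x‖)
    -- the graph μ of V is isotropic
    (hiso : {z : X | ∃ x : ↥Xp, z = (x : X) + V x} ⊆
      annSet ω {z : X | ∃ x : ↥Xp, z = (x : X) + V x}) :
    -- then μ is Lagrangian
    {z : X | ∃ x : ↥Xp, z = (x : X) + V x} =
      annSet ω {z : X | ∃ x : ↥Xp, z = (x : X) + V x} := by
  refine Set.Subset.antisymm hiso ?_
  intro y hy
  have hyT : y ∈ Xp ⊔ Xm := by rw [hsup]; exact Submodule.mem_top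
  rcases Submodule.mem_sup.mp hyT with ⟨p, hp, m, hm, rfl⟩
  rcases hVsurj m hm with ⟨q, rfl⟩
  -- subtraction in second slot
  have hsub : ∀ x a b : X, ω x (a - b) = ω x a - ω x b := by
    intro x a b
    have h : a - b = a + (-1 : ℂ) • b := by
      simp [sub_eq_add_neg]
    rw [h, h2add, h2smul]
    simp [sub_eq_add_neg]
  set d : X := p - (q : X) with hdef
  have hd : d ∈ Xp := Submodule.sub_mem Xp hp q.2
  -- first slot vanishing against Xm elements
  have hmz : ∀ z ∈ Xm, ω z d = 0 := by
    intro z hz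
    rw [hskew d z, horth d hd z hz]
    simp
  -- key expansion
  have key : ∀ (a : ↥Xp) (r : X), r ∈ Xp → ω ((a : X) + V a) (r + V q) =
      ω (a : X) r + ω (V a) (V q) := by
    intro a r hr
    rw [h1add, h2add, h2add]
    rw [horth (a : X) a.2 (V q) (hVm q)]
    have hz : ω (V a) r = 0 := by
      rw [hskew r (V a), horth r hr (V a) (hVm a)]
      simp
    rw [hz]
    ring
  have hpz : ∀ a : ↥Xp, ω (a : X) d = 0 := by
    intro a
    have h1 : ω ((a : X) + V a) (p + V q) = 0 :=
      hy ((a : X) + V a) ⟨a, rfl⟩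
    have h2 : ω ((a : X) + V a) ((q : X) + V q) = 0 :=
      hiso ⟨q, rfl⟩ ((a : X) + V a) ⟨a, rfl⟩
    rw [key a p hp] at h1
    rw [key a (q : X) q.2] at h2
    have : ω (a : X) p = ω (a : X) (q : X) := by linear_combination h1 - h2
    rw [hdef, hsub, this, sub_self]
  -- ω z d = 0 for all z
  have hall : ∀ z : X, ω z d = 0 := by
    intro z
    have hzT : z ∈ Xp ⊔ Xm := by rw [hsup]; exact Submodule.mem_top
    rcases Submodule.mem_sup.mp hzT with ⟨zp, hzp, zm, hzm, rfl⟩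
    rw [h1add, hpz ⟨zp, hzp⟩, hmz zm hzm, add_zero]
  have hall' : ∀ z : X, ω d z = 0 := by
    intro z
    rw [hskew z d, hall z]
    simp
  have hd0 : d = 0 := hnondeg d hall'
  have hpq : p = (q : X) := by
    have := sub_eq_zero.mp hd0
    exact this
  exact ⟨q, by rw [hpq]⟩
end

section
/- Let X be a complex Banach space equipped with a bounded inner product h, and let A : X → X be a bounded linear operator that is unitary with respect to h (h(Ax,Ay) = h(x,y) for all x,y ∈ X) and such that A − I is Fredholm of index 0. Then there exists ε > 0 such that every spectral point z ∈ σ(A) with |z − 1| ≤ ε equals 1 (so 1 is not an accumulation point of the spectrum of A), and moreover ker((A − I)²) = ker(A − I). -/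
/-- A bounded inner product on a complex Banach space: additive and ℂ-homogeneous in the
first argument, conjugate-symmetric, positive definite, and bounded. -/
def IsBoundedInnerProduct {X : Type*} [NormedAddCommGroup X] [NormedSpace ℂ X]
    (h : X → X → ℂ) : Prop :=
  (∀ x y z : X, h (x + y) z = h x z + h y z) ∧
  (∀ (c : ℂ) (x y : X), h (c • x) y = c * h x y) ∧
  (∀ x y : X, h y x = starRingEnd ℂ (h x y)) ∧
  (∀ x : X, x ≠ 0 → 0 < (h x x).re) ∧
  (∃ C : ℝ, ∀ x y : X, ‖h x y‖ ≤ C * ‖x‖ * ‖y‖)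

set_option maxHeartbeats 1000000 in

private lemma aux_units_ball {E : Type*} [NormedAddCommGroup E] [NormedSpace ℂ E]
    [CompleteSpace E] (B : E →L[ℂ] E) (hB : IsUnit B) :
    ∃ ε > (0 : ℝ), ∀ c : ℂ, ‖c‖ < ε → IsUnit (algebraMap ℂ (E →L[ℂ] E) c - B) := by
  have h0 : (0 : ℂ) ∉ spectrum ℂ B := (spectrum.zero_notMem_iff ℂ).mpr hB
  obtain ⟨ε, hε, hball⟩ := Metric.isOpen_iff.mp (spectrum.isClosed B).isOpen_compl 0 h0
  refine ⟨ε, hε, fun c hc => spectrum.notMem_iff.mp (fun hm => ?_)⟩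
  exact hball (by simpa [mem_ball_zero_iff] using hc) hm

/-- Let `A` be a bounded operator on a complex Banach space `X`, unitary with
respect to a bounded inner product `h`, with `A - I` Fredholm of index `0`. Then `1` is not
an accumulation point of `σ(A)` (all spectral points close enough to `1` equal `1`), and
`ker((A - I)²) = ker(A - I)` (the eigenvalue `1` has algebraic multiplicity
`dim ker(A - I)`). -/
theorem h_unitary_isolated_spectrum_near_one
    {X : Type*} [NormedAddCommGroup X] [NormedSpace ℂ X] [CompleteSpace X]
    (h : X → X → ℂ) (hh : IsBoundedInnerProduct h)
    (A : X →L[ℂ] X)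
    -- A is unitary with respect to h
    (hAunit : ∀ x y : X, h (A x) (A y) = h x y)
    -- A - I is Fredholm of index 0
    (hker : FiniteDimensional ℂ ↥(LinearMap.ker ((A - 1 : X →L[ℂ] X) : X →ₗ[ℂ] X)))
    (hran : IsClosed ((LinearMap.range ((A - 1 : X →L[ℂ] X) : X →ₗ[ℂ] X) : Submodule ℂ X) : Set X))
    (hcoker : FiniteDimensional ℂ (X ⧸ LinearMap.range ((A - 1 : X →L[ℂ] X) : X →ₗ[ℂ] X)))
    (hindex : Module.finrank ℂ ↥(LinearMap.ker ((A - 1 : X →L[ℂ] X) : X →ₗ[ℂ] X)) =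
      Module.finrank ℂ (X ⧸ LinearMap.range ((A - 1 : X →L[ℂ] X) : X →ₗ[ℂ] X))) :
    (∃ ε > (0 : ℝ), ∀ z ∈ spectrum ℂ A, ‖z - 1‖ ≤ ε → z = 1) ∧
    LinearMap.ker ((((A - 1).comp (A - 1) : X →L[ℂ] X)) : X →ₗ[ℂ] X) = LinearMap.ker ((A - 1 : X →L[ℂ] X) : X →ₗ[ℂ] X) := by
  obtain ⟨hadd, hsmul, hsym, hpos, -⟩ := hh
  set N := LinearMap.ker ((A - 1 : X →L[ℂ] X) : X →ₗ[ℂ] X) with hN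
  set R := LinearMap.range ((A - 1 : X →L[ℂ] X) : X →ₗ[ℂ] X) with hR
  -- membership facts
  have hmemN : ∀ x : X, x ∈ N ↔ A x = x := by
    intro x
    simp [hN, LinearMap.mem_ker, sub_eq_zero]
  -- h x x = 0 → x = 0
  have hzero : ∀ x : X, h x x = 0 → x = 0 := by
    intro x hx
    by_contra hx0
    have := hpos x hx0
    rw [hx] at this
    simp at this
  -- orthogonality: N ⟂ R
  have horth : ∀ x ∈ N, ∀ y : X, h x ((A - 1) y) = 0 := by
    intro x hx y
    have hAx : A x = x := (hmemN x).mp hx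
    have e1 : (A - 1) y = A y + (-1 : ℂ) • y := by
      simp [sub_eq_add_neg]
    have e2 : h ((A - 1) y) x = h (A y) x + (-1) * h y x := by
      rw [e1, hadd, hsmul]
    have e3 : h (A y) x = h y x := by
      conv_lhs => rw [← hAx]
      exact hAunit y x
    have : h ((A - 1) y) x = 0 := by rw [e2, e3]; ring
    rw [hsym, this]
    simp
  -- disjointness
  have hdisj : Disjoint N R := by
    rw [Submodule.disjoint_def]
    intro x hxN hxR
    obtain ⟨y, hy⟩ := hxR
    have := horth x hxN y
    rw [show (A - 1) y = x from hy] at this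
    exact hzero x this
  -- codisjointness via index 0
  have hsup : N ⊔ R = ⊤ := by
    let f : N →ₗ[ℂ] X ⧸ R := R.mkQ.comp N.subtype
    have hfinj : Function.Injective f := by
      rw [← LinearMap.ker_eq_bot]
      rw [Submodule.eq_bot_iff]
      intro x hx
      have hx' : (x : X) ∈ R := by
        simpa [f, Submodule.Quotient.mk_eq_zero] using hx
      have := Submodule.disjoint_def.mp hdisj x x.2 hx'
      exact Subtype.ext this
    have hfsurj : Function.Surjective f :=
      (LinearMap.injective_iff_surjective_of_finrank_eq_finrank hindex).mp hfinj
    rw [eq_top_iff]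
    intro x _
    obtain ⟨n, hn⟩ := hfsurj (R.mkQ x)
    have hxn : x - (n : X) ∈ R := by
      rw [← Submodule.Quotient.mk_eq_zero R]
      have h0 : R.mkQ (x - (n : X)) = 0 := by
        rw [map_sub, ← hn]
        simp [f]
      simpa using h0
    have : x = (n : X) + (x - n) := by abel
    rw [this]
    exact Submodule.add_mem_sup n.2 hxn
  -- second conclusion
  have hker2 : LinearMap.ker ((((A - 1).comp (A - 1) : X →L[ℂ] X)) : X →ₗ[ℂ] X) = LinearMap.ker ((A - 1 : X →L[ℂ] X) : X →ₗ[ℂ] X) := by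
    apply le_antisymm
    · intro x hx
      have hx' : (A - 1) ((A - 1) x) = 0 := hx
      have h1 : (A - 1) x ∈ N := hx'
      have h2 : (A - 1) x ∈ R := ⟨x, rfl⟩
      have : (A - 1) x = 0 := Submodule.disjoint_def.mp hdisj _ h1 h2
      exact this
    · intro x hx
      have hx' : (A - 1) x = 0 := hx
      show (A - 1) ((A - 1) x) = 0
      rw [hx']
      simp
  -- the restricted operator B on R
  haveI : CompleteSpace R := hran.completeSpace_coe
  have hmaps : ∀ r : R, ((A - 1).comp R.subtypeL) r ∈ R := fun r => ⟨r, rfl⟩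
  let B : R →L[ℂ] R := ((A - 1).comp R.subtypeL).codRestrict R hmaps
  have hBapp : ∀ r : R, (B r : X) = (A - 1) (r : X) := fun r => rfl
  -- B is bijective
  have hBker : LinearMap.ker (B : R →ₗ[ℂ] R) = ⊥ := by
    rw [Submodule.eq_bot_iff]
    intro r hr
    have : (A - 1) (r : X) = 0 := by
      have := congrArg (Subtype.val) (show B r = 0 from hr)
      simpa [hBapp] using this
    exact Subtype.ext (Submodule.disjoint_def.mp hdisj _ this r.2)
  have hBrange : LinearMap.range (B : R →ₗ[ℂ] R) = ⊤ := by
    rw [eq_top_iff]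
    rintro t -
    obtain ⟨w, hw⟩ := t.2
    have hw' : w ∈ N ⊔ R := hsup ▸ Submodule.mem_top
    obtain ⟨n, hn, r, hr, hnr⟩ := Submodule.mem_sup.mp hw'
    refine ⟨⟨r, hr⟩, ?_⟩
    apply Subtype.ext
    show ((B ⟨r, hr⟩ : R) : X) = t
    rw [hBapp]
    have hn0 : (A - 1) n = 0 := hn
    calc (A - 1) r = (A - 1) n + (A - 1) r := by rw [hn0]; simp
      _ = (A - 1) (n + r) := by rw [map_add]
      _ = (A - 1) w := by rw [hnr]
      _ = (t : X) := hw
  have hBunit : IsUnit B :=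
    ⟨(ContinuousLinearEquiv.ofBijective B hBker hBrange).toUnit,
      ContinuousLinearEquiv.coe_ofBijective _ _ _⟩
  -- small perturbations of B are invertible
  obtain ⟨ε, hε, hU⟩ := aux_units_ball B hBunit
  refine ⟨⟨ε / 2, by linarith, ?_⟩, hker2⟩
  intro z hz hzd
  by_contra hz1
  -- c = z - 1 is small and nonzero
  set c : ℂ := z - 1 with hc
  have hc0 : c ≠ 0 := sub_ne_zero.mpr hz1
  have hcU : IsUnit (algebraMap ℂ (R →L[ℂ] R) c - B) := by
    refine hU c ?_
    calc ‖c‖ = ‖z - 1‖ := rfl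
      _ ≤ ε / 2 := hzd
      _ < ε := by linarith
  obtain ⟨u, hu⟩ := hcU
  -- key fact: action of u
  have huapp : ∀ r : R, ((u : R →L[ℂ] R) r : X) = c • (r : X) - (A - 1) (r : X) := by
    intro r
    rw [hu]
    simp [hBapp, Algebra.algebraMap_eq_smul_one]
  -- the operator z - A
  set f : X →L[ℂ] X := algebraMap ℂ (X →L[ℂ] X) z - A with hf
  have hfapp : ∀ x : X, f x = c • x - (A - 1) x := by
    intro x
    simp only [hf, hc, ContinuousLinearMap.sub_apply, Algebra.algebraMap_eq_smul_one,
      ContinuousLinearMap.smul_apply, ContinuousLinearMap.one_apply]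
    rw [sub_smul, one_smul]
    abel
  -- f is injective
  have hfker : LinearMap.ker (f : X →ₗ[ℂ] X) = ⊥ := by
    rw [Submodule.eq_bot_iff]
    intro x hx
    have hx0 : f x = 0 := hx
    obtain ⟨n, hn, r, hr, hnr⟩ := Submodule.mem_sup.mp
      (show x ∈ N ⊔ R from hsup ▸ Submodule.mem_top)
    have hn0 : (A - 1) n = 0 := hn
    have key : c • n = (A - 1) r - c • r := by
      have := hfapp x
      rw [hx0, ← hnr] at this
      have h2 : (A - 1) (n + r) = (A - 1) r := by rw [map_add, hn0]; simp
      rw [h2, smul_add] at this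
      linear_combination (norm := module) -this
    have hmemR : c • n ∈ R := by
      rw [key]
      exact sub_mem ⟨r, rfl⟩ (R.smul_mem c hr)
    have hcn0 : c • n = 0 :=
      Submodule.disjoint_def.mp hdisj _ (N.smul_mem c hn) hmemR
    have hn0' : n = 0 := by
      rcases smul_eq_zero.mp hcn0 with hc' | hn'
      · exact absurd hc' hc0
      · exact hn'
    have hr0 : (⟨r, hr⟩ : R) = 0 := by
      have hv0 : (A - 1) r - c • r = 0 := by
        rw [hn0'] at key
        simpa using key.symm
      have heq : (u : R →L[ℂ] R) ⟨r, hr⟩ = 0 := by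
        apply Subtype.ext
        rw [huapp]
        simp only [Submodule.coe_zero]
        rw [← neg_sub, hv0, neg_zero]
      calc (⟨r, hr⟩ : R) = ((↑u⁻¹ * ↑u : R →L[ℂ] R)) ⟨r, hr⟩ := by
            rw [u.inv_mul]; rfl
        _ = (↑u⁻¹ : R →L[ℂ] R) ((u : R →L[ℂ] R) ⟨r, hr⟩) := rfl
        _ = 0 := by rw [heq]; simp
    have : r = 0 := congrArg Subtype.val hr0
    rw [← hnr, hn0', this]
    simp
  -- f is surjective
  have hfrange : LinearMap.range (f : X →ₗ[ℂ] X) = ⊤ := by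
    rw [eq_top_iff]
    rintro y -
    obtain ⟨m, hm, s, hs, hms⟩ := Submodule.mem_sup.mp
      (show y ∈ N ⊔ R from hsup ▸ Submodule.mem_top)
    set rr : R := (↑u⁻¹ : R →L[ℂ] R) ⟨s, hs⟩ with hrr
    have hur : (u : R →L[ℂ] R) rr = ⟨s, hs⟩ := by
      rw [hrr]
      calc (u : R →L[ℂ] R) ((↑u⁻¹ : R →L[ℂ] R) ⟨s, hs⟩)
          = ((↑u * ↑u⁻¹ : R →L[ℂ] R)) ⟨s, hs⟩ := rfl
        _ = ⟨s, hs⟩ := by rw [u.mul_inv]; rfl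
    have hm0 : (A - 1) (c⁻¹ • m) = 0 := by
      have : (A - 1) m = 0 := hm
      rw [map_smul, this, smul_zero]
    refine ⟨c⁻¹ • m + (rr : X), ?_⟩
    show f (c⁻¹ • m + (rr : X)) = y
    rw [hfapp, map_add, hm0, smul_add]
    have h1 : c • (c⁻¹ • m) = m := by
      rw [smul_smul, mul_inv_cancel₀ hc0, one_smul]
    have h2 : c • (rr : X) - (A - 1) (rr : X) = s := by
      have := congrArg Subtype.val hur
      rw [huapp] at this
      exact this
    rw [h1]
    calc m + c • (rr : X) - (0 + (A - 1) (rr : X))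
        = m + (c • (rr : X) - (A - 1) (rr : X)) := by abel
      _ = m + s := by rw [h2]
      _ = y := hms
  -- conclude: f is a unit, contradicting z ∈ spectrum
  have hfU : IsUnit f :=
    ⟨(ContinuousLinearEquiv.ofBijective f hfker hfrange).toUnit,
      ContinuousLinearEquiv.coe_ofBijective _ _ _⟩
  exact spectrum.mem_iff.mp hz hfU
end

section
/- Let X be a Hilbert space and M, N subspaces with dim M = dim N = n, where n is a positive integer. Let δ ≥ 0 be such that every y ∈ N with ‖y‖ = 1 satisfies dist(y, M) ≤ δ, and assume √n·δ < 1. Then every x ∈ M with ‖x‖ = 1 satisfies dist(x, N) ≤ (√n·δ)/(1 − √n·δ). -/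
open Metric

set_option maxHeartbeats 1000000 in
/-- Let `M, N` be `n`-dimensional subspaces of a Hilbert space (`n ≥ 1`).
If every unit vector of `N` has distance at most `δ` from `M` and `√n·δ < 1`, then every
unit vector of `M` has distance at most `√n·δ/(1 - √n·δ)` from `N`. -/
theorem gap_estimate_equidimensional
    {X : Type*} [NormedAddCommGroup X] [InnerProductSpace ℂ X] [CompleteSpace X]
    (M N : Submodule ℂ X) (n : ℕ) (hn : 0 < n)
    [FiniteDimensional ℂ ↥M] [FiniteDimensional ℂ ↥N]
    (hdimM : Module.finrank ℂ ↥M = n) (hdimN : Module.finrank ℂ ↥N = n)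
    (δ : ℝ) (hδ : 0 ≤ δ)
    (hNM : ∀ y ∈ N, ‖y‖ = 1 → Metric.infDist y (M : Set X) ≤ δ)
    (hsmall : Real.sqrt n * δ < 1) :
    ∀ x ∈ M, ‖x‖ = 1 →
      Metric.infDist x (N : Set X) ≤ Real.sqrt n * δ / (1 - Real.sqrt n * δ) := by
  intro x hx hx1
  have hs1 : (1 : ℝ) ≤ Real.sqrt n := by
    rw [show (1:ℝ) = Real.sqrt 1 by simp]
    exact Real.sqrt_le_sqrt (by exact_mod_cast hn)
  have hδs : δ ≤ Real.sqrt n * δ := le_mul_of_one_le_left hδ hs1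
  have hδ1 : δ < 1 := lt_of_le_of_lt hδs hsmall
  -- key: infDist u M = ‖u - P u‖
  have hproj : ∀ u : X, Metric.infDist u (M : Set X) = ‖u - (M.orthogonalProjection u : X)‖ := by
    intro u
    rw [Metric.infDist_eq_iInf, show ((M.orthogonalProjection u : M) : X) = M.starProjection u from rfl,
      Submodule.starProjection_minimal]
    congr 1
    ext v
    rw [dist_eq_norm]
  -- every y in N satisfies ‖y - P y‖ ≤ δ ‖y‖
  have hkey : ∀ y : X, y ∈ N → ‖y - (M.orthogonalProjection y : X)‖ ≤ δ * ‖y‖ := by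
    intro y hy
    rcases eq_or_ne y 0 with rfl | hy0
    · simp
    · have hny : (0:ℝ) < ‖y‖ := norm_pos_iff.mpr hy0
      set u := (‖y‖⁻¹ : ℂ) • y with hu
      have hun : ‖u‖ = 1 := by
        simp [hu, norm_smul, hny.ne']
      have huN : u ∈ N := N.smul_mem _ hy
      have := hNM u huN hun
      rw [hproj u] at this
      have hlin : u - (M.orthogonalProjection u : X)
          = (‖y‖⁻¹ : ℂ) • (y - (M.orthogonalProjection y : X)) := by
        simp [hu, map_smul, smul_sub]
      rw [hlin, norm_smul] at this
      have : ‖y‖⁻¹ * ‖y - (M.orthogonalProjection y : X)‖ ≤ δ := by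
        simpa using this
      calc ‖y - (M.orthogonalProjection y : X)‖
          = ‖y‖ * (‖y‖⁻¹ * ‖y - (M.orthogonalProjection y : X)‖) := by
            field_simp
        _ ≤ ‖y‖ * δ := by
            exact mul_le_mul_of_nonneg_left this hny.le
        _ = δ * ‖y‖ := mul_comm _ _
  -- the projection restricted to N is injective, hence surjective onto M
  set f : ↥N →ₗ[ℂ] ↥M := (M.orthogonalProjection).toLinearMap.comp N.subtype with hf
  have hinj : Function.Injective f := by
    rw [← LinearMap.ker_eq_bot, LinearMap.ker_eq_bot']
    intro ⟨y, hy⟩ hfy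
    have hPy : (M.orthogonalProjection y : X) = 0 := by
      have : (f ⟨y, hy⟩ : X) = 0 := by rw [hfy]; simp
      simpa [hf] using this
    have h1 := hkey y hy
    rw [hPy, sub_zero] at h1
    have h2 : ‖y‖ ≤ 0 := by nlinarith [norm_nonneg y]
    have h3 : y = 0 := norm_le_zero_iff.mp h2
    ext
    simp [h3]
  have hsurj : Function.Surjective f :=
    (LinearMap.injective_iff_surjective_of_finrank_eq_finrank
      (by rw [hdimN, hdimM])).mp hinj
  obtain ⟨⟨y, hyN⟩, hfy⟩ := hsurj ⟨x, hx⟩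
  have hPyx : (M.orthogonalProjection y : X) = x := by
    have : (f ⟨y, hyN⟩ : X) = x := by rw [hfy]
    simpa [hf] using this
  have hgap : ‖y - x‖ ≤ δ * ‖y‖ := by
    have := hkey y hyN
    rwa [hPyx] at this
  -- bound on ‖y‖
  have hylb : (1 - δ) * ‖y‖ ≤ 1 := by
    have h1 : ‖y‖ - ‖y - x‖ ≤ ‖x‖ := by
      have := norm_sub_norm_le y (y - x)
      simpa using this
    rw [hx1] at h1
    nlinarith [norm_nonneg y]
  have hdist : Metric.infDist x (N : Set X) ≤ δ * ‖y‖ := by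
    calc Metric.infDist x (N : Set X) ≤ dist x y :=
          Metric.infDist_le_dist_of_mem hyN
      _ = ‖y - x‖ := by rw [dist_eq_norm, norm_sub_rev]
      _ ≤ δ * ‖y‖ := hgap
  have h1δ : (0:ℝ) < 1 - δ := by linarith
  have h1s : (0:ℝ) < 1 - Real.sqrt n * δ := by linarith
  have hy1 : ‖y‖ ≤ 1 / (1 - δ) := by
    rw [le_div_iff₀ h1δ]; linarith [hylb]
  have step1 : δ * ‖y‖ ≤ δ / (1 - δ) := by
    calc δ * ‖y‖ ≤ δ * (1 / (1 - δ)) := mul_le_mul_of_nonneg_left hy1 hδ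
      _ = δ / (1 - δ) := by ring
  have step2 : δ / (1 - δ) ≤ Real.sqrt n * δ / (1 - Real.sqrt n * δ) := by
    rw [div_le_div_iff₀ h1δ h1s]
    have : δ * Real.sqrt ↑n * δ = Real.sqrt ↑n * δ * δ := by ring
    nlinarith [hδs]
  linarith
end
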